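/- arXiv:1309.5379 — 3 statements merged into one kernel-verified Lean document; each statement's English description precedes it below -/
import Mathlib

section
/- In the setup with longest cycle C, vertex u off C, vertex v on C with v⁺,v⁻ ∈ N(u), and B = N(u) ∪ N(v) = {b₁ = v⁺, …, b_m = v⁻} in cyclic order, there is no path P in G consisting of all vertices of the arc from v⁺ to b_i⁻ along C (for some 1 < i < m) whose endpoints are v⁺ and some b_j with j < i. (I.e., G contains no 'bad path' of form (i).) -/
open scoped Classical

namespace Paper

noncomputable section

variable {V : Type*}

/-- degree as cardinality of neighbor set -/
def deg (G : SimpleGraph V) (x : V) : ℕ := (G.neighborSet x).ncard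

/-- G is 1-tough -/
def OneTough (G : SimpleGraph V) : Prop :=
  ∀ S : Set V, S.Nonempty → Nat.card ((G.induce Sᶜ).ConnectedComponent) ≤ S.ncard

def IsIndepTriple (G : SimpleGraph V) (s : Finset V) : Prop :=
  s.card = 3 ∧ ∀ x ∈ s, ∀ y ∈ s, x ≠ y → ¬ G.Adj x y

def sigma3 [Fintype V] (G : SimpleGraph V) : ℕ :=
  if ∃ s : Finset V, IsIndepTriple G s then
    sInf {k | ∃ s : Finset V, IsIndepTriple G s ∧ ∑ x ∈ s, deg G x = k}
  else 3 * (Fintype.card V - 1)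

def NC2 [Fintype V] (G : SimpleGraph V) : ℕ :=
  if G = ⊤ then Fintype.card V - 1
  else sInf {k | ∃ x y : V, G.dist x y = 2 ∧ (G.neighborSet x ∪ G.neighborSet y).ncard = k}

def circumference (G : SimpleGraph V) : ℕ :=
  sSup {k | ∃ (a : V) (w : G.Walk a a), w.IsCycle ∧ w.length = k}

def IsLongestCycle (G : SimpleGraph V) {a : V} (c : G.Walk a a) : Prop :=
  c.IsCycle ∧ ∀ (b : V) (w : G.Walk b b), w.IsCycle → w.length ≤ c.length

/-- successor of a vertex along the oriented cycle `c` (identity off the cycle) -/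
def cSucc [DecidableEq V] {G : SimpleGraph V} {a : V} (c : G.Walk a a) (x : V) : V :=
  if h : x ∈ c.support.tail then c.support.tail.next x h else x

/-- predecessor of a vertex along the oriented cycle `c` (identity off the cycle) -/
def cPred [DecidableEq V] {G : SimpleGraph V} {a : V} (c : G.Walk a a) (x : V) : V :=
  if h : x ∈ c.support.tail then c.support.tail.prev x h else x

/-- vertices strictly between `x` and `y` going forward along `c` -/
def arc [DecidableEq V] {G : SimpleGraph V} {a : V} (c : G.Walk a a) (x y : V) : Set V :=
  {z | ∃ i k : ℕ, 0 < i ∧ i < k ∧ k < c.length ∧ (cSucc c)^[k] x = y ∧ z = (cSucc c)^[i] x}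

/-- length of the interval of the cycle `c` starting at `b` determined by `B` -/
def intervalLen [DecidableEq V] {G : SimpleGraph V} {a : V} (c : G.Walk a a)
    (B : Set V) (b : V) : ℕ :=
  sInf {k | 0 < k ∧ (cSucc c)^[k] b ∈ B}

/-- inner vertices of the interval of the cycle `c` starting at `b` determined by `B` -/
def innerVerts [DecidableEq V] {G : SimpleGraph V} {a : V} (c : G.Walk a a)
    (B : Set V) (b : V) : Set V :=
  {x | ∃ i, 0 < i ∧ i < intervalLen c B b ∧ x = (cSucc c)^[i] b}

/-- the union of the neighborhoods of the vertices in `S` -/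
def nbhdSet (G : SimpleGraph V) (S : Set V) : Set V := {z | ∃ y ∈ S, G.Adj y z}

/-- a set of vertices is independent -/
def IsIndepSet (G : SimpleGraph V) (S : Set V) : Prop :=
  ∀ x ∈ S, ∀ y ∈ S, ¬ G.Adj x y

-- ===== auxiliary lemmas for stmt8 =====

lemma length_rotate' [DecidableEq V] {G : SimpleGraph V} {u v : V} (c : G.Walk v v)
    (h : u ∈ c.support) : (c.rotate u h).length = c.length := by
  rw [SimpleGraph.Walk.rotate, SimpleGraph.Walk.length_append, add_comm,
    ← SimpleGraph.Walk.length_append, SimpleGraph.Walk.take_spec]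

lemma support_get' {G : SimpleGraph V} {a b : V} (p : G.Walk a b) (i : ℕ) (hi : i ≤ p.length) :
    p.support[i]? = some (p.getVert i) := by
  induction p generalizing i with
  | nil =>
    simp only [SimpleGraph.Walk.length_nil, Nat.le_zero] at hi
    subst hi; simp [SimpleGraph.Walk.getVert]
  | cons h q ih =>
    cases i with
    | zero => simp [SimpleGraph.Walk.getVert]
    | succ n =>
      simp only [SimpleGraph.Walk.support_cons, List.getElem?_cons_succ]
      exact ih n (by simpa [Nat.succ_le_succ_iff] using hi)

/-- segment of a walk from index i with l steps -/
def seg {G : SimpleGraph V} {a b : V} (p : G.Walk a b) :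
    (i l : ℕ) → (i + l ≤ p.length) → G.Walk (p.getVert i) (p.getVert (i + l))
  | _, 0, _ => SimpleGraph.Walk.nil.copy rfl rfl
  | i, l+1, h =>
    (SimpleGraph.Walk.cons (p.adj_getVert_succ (by omega))
      ((seg p (i+1) l (by omega)).copy rfl (by rw [Nat.add_right_comm]))).copy rfl
      (by rw [Nat.add_assoc])

lemma seg_support {G : SimpleGraph V} {a b : V} (p : G.Walk a b) (i l : ℕ)
    (h : i + l ≤ p.length) :
    (seg p i l h).support = (List.range (l+1)).map (fun t => p.getVert (i + t)) := by
  induction l generalizing i with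
  | zero => simp [seg, List.range_succ]
  | succ l ih =>
    rw [seg]
    simp only [SimpleGraph.Walk.support_copy, SimpleGraph.Walk.support_cons, ih (i+1) (by omega)]
    conv_rhs => rw [List.range_succ_eq_map, List.map_cons, List.map_map,
      List.range_succ_eq_map, List.map_cons, List.map_map]
    simp only [Function.comp_def, Nat.add_zero]
    congr 1
    conv_lhs => rw [List.range_succ_eq_map, List.map_cons, List.map_map]
    simp only [Function.comp_def, Nat.add_zero]
    congr 1
    apply List.map_congr_left
    intro t _
    congr 1
    omega

lemma mod_aux (n i : ℕ) (hn : 1 ≤ n) (hi : i < n) :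
    (i + n - 1) % n = if i = 0 then n - 1 else i - 1 := by
  rcases Nat.eq_zero_or_pos i with rfl | hpos
  · rw [if_pos rfl, Nat.zero_add, Nat.mod_eq_of_lt (by omega)]
  · rw [if_neg (by omega)]
    have h1 : i + n - 1 = (i - 1) + n := by omega
    rw [h1, Nat.add_mod_right, Nat.mod_eq_of_lt (by omega)]

section Coord
open SimpleGraph
variable {G : SimpleGraph V} [DecidableEq V] {a v : V} (c : G.Walk a a) (hc : c.IsCycle)
  (hv : v ∈ c.support)

/-- the `i`-th vertex along the cycle `c` starting from `v` -/
def gvt (i : ℕ) : V := (c.rotate v hv).getVert i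

omit hc in lemma gvt_zero : gvt c hv 0 = v := Walk.getVert_zero _

include hc

lemma T_nodup : List.Nodup ((c.rotate v hv).support.tail) := (hc.rotate hv).support_nodup

lemma T_length : (List.length ((c.rotate v hv).support.tail)) = c.length := by
  have h1 := (c.rotate v hv).length_support
  have h2 := length_rotate' c hv
  have h3 := congrArg List.length ((c.rotate v hv).support_eq_cons)
  simp only [List.length_cons] at h3
  omega

lemma T_get (j : ℕ) (hj : j < c.length) :
    ((c.rotate v hv).support.tail)[j]? = some (gvt c hv (j+1)) := by
  have h1 := support_get' (c.rotate v hv) (j+1) (by rw [length_rotate' c hv]; omega)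
  rw [(c.rotate v hv).support_eq_cons] at h1
  simpa [gvt] using h1

lemma gvt_last : gvt c hv c.length = v := by
  rw [gvt, ← length_rotate' c hv]; exact Walk.getVert_length _

lemma gvt_repr (i : ℕ) (hi : i < c.length) :
    ((c.rotate v hv).support.tail)[(i + c.length - 1) % c.length]? =
      some (gvt c hv i) := by
  have hn3 := hc.three_le_length
  rw [mod_aux c.length i (by omega) hi]
  rcases Nat.eq_zero_or_pos i with rfl | hpos
  · rw [if_pos rfl, T_get c hc hv (c.length-1) (by omega)]
    have h4 : c.length - 1 + 1 = c.length := by omega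
    rw [h4, gvt_last c hc hv, gvt_zero]
  · rw [if_neg (by omega), T_get c hc hv (i-1) (by omega)]
    congr 2
    omega

lemma gvt_mem_T (i : ℕ) (hi : i < c.length) : gvt c hv i ∈ ((c.rotate v hv).support.tail) :=
  List.mem_of_getElem? (gvt_repr c hc hv i hi)

lemma gvt_inj {i j : ℕ} (hi : i < c.length) (hj : j < c.length)
    (hij : gvt c hv i = gvt c hv j) : i = j := by
  have hn3 := hc.three_le_length
  have h1 := gvt_repr c hc hv i hi
  have h2 := gvt_repr c hc hv j hj
  rw [hij] at h1
  have hnd := T_nodup c hc hv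
  have hTl := T_length c hc hv
  have hlt1 : (i + c.length - 1) % c.length < List.length ((c.rotate v hv).support.tail) := by
    rw [hTl]; exact Nat.mod_lt _ (by omega)
  have hlt2 : (j + c.length - 1) % c.length < List.length ((c.rotate v hv).support.tail) := by
    rw [hTl]; exact Nat.mod_lt _ (by omega)
  have e1 : ((c.rotate v hv).support.tail).get ⟨_, hlt1⟩ = gvt c hv j :=
    Option.some.inj ((List.getElem?_eq_getElem hlt1).symm.trans h1)
  have e2 : ((c.rotate v hv).support.tail).get ⟨_, hlt2⟩ = gvt c hv j :=
    Option.some.inj ((List.getElem?_eq_getElem hlt2).symm.trans h2)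
  have hfin := (List.Nodup.get_inj_iff hnd).mp (e1.trans e2.symm)
  have hval : (i + c.length - 1) % c.length = (j + c.length - 1) % c.length :=
    Fin.val_eq_of_eq hfin
  rw [mod_aux c.length i (by omega) hi, mod_aux c.length j (by omega) hj] at hval
  split_ifs at hval <;> omega

lemma cSucc_eq_next {z : V} (hz : z ∈ ((c.rotate v hv).support.tail)) :
    cSucc c z = List.next ((c.rotate v hv).support.tail) z hz := by
  have hrot : ((c.rotate v hv).support.tail) ~r c.support.tail := Walk.support_rotate c v hv
  have hz' : z ∈ c.support.tail := hrot.mem_iff.mp hz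
  rw [cSucc, dif_pos hz']
  exact List.isRotated_next_eq hrot.symm (hc.support_nodup) _

lemma cSucc_gvt (i : ℕ) (hi : i < c.length) :
    cSucc c (gvt c hv i) = gvt c hv (i+1) := by
  have hn3 := hc.three_le_length
  have hmem := gvt_mem_T c hc hv i hi
  rw [cSucc_eq_next c hc hv hmem]
  have hTl := T_length c hc hv
  have hnd := T_nodup c hc hv
  have hlt1 : (i + c.length - 1) % c.length < List.length ((c.rotate v hv).support.tail) := by
    rw [hTl]; exact Nat.mod_lt _ (by omega)
  have e1 : ((c.rotate v hv).support.tail).get ⟨_, hlt1⟩ = gvt c hv i :=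
    Option.some.inj ((List.getElem?_eq_getElem hlt1).symm.trans (gvt_repr c hc hv i hi))
  have hnext := List.next_getElem ((c.rotate v hv).support.tail) hnd
    ((i + c.length - 1) % c.length) hlt1
  have hmod : ((i + c.length - 1) % c.length + 1) % List.length ((c.rotate v hv).support.tail)
      = i := by
    rw [hTl, mod_aux c.length i (by omega) hi]
    split_ifs with h0
    · subst h0
      have h4 : c.length - 1 + 1 = c.length := by omega
      rw [h4, Nat.mod_self]
    · have h4 : i - 1 + 1 = i := by omega
      rw [h4, Nat.mod_eq_of_lt hi]
  have hlt : i < List.length ((c.rotate v hv).support.tail) := by omega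
  have e2 : ((c.rotate v hv).support.tail).get ⟨i, hlt⟩ = gvt c hv (i+1) :=
    Option.some.inj ((List.getElem?_eq_getElem hlt).symm.trans (T_get c hc hv i (by omega)))
  calc List.next ((c.rotate v hv).support.tail) (gvt c hv i) hmem
      = List.next ((c.rotate v hv).support.tail)
          (((c.rotate v hv).support.tail).get ⟨(i + c.length - 1) % c.length, hlt1⟩)
          (List.get_mem _ _) := by congr 1; exact e1.symm
    _ = gvt c hv (i+1) := by
        refine hnext.trans ?_
        have heq : (⟨((i + c.length - 1) % c.length + 1) %
            List.length ((c.rotate v hv).support.tail),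
            Nat.mod_lt _ (by omega)⟩ : Fin (List.length ((c.rotate v hv).support.tail)))
            = ⟨i, hlt⟩ := Fin.ext hmod
        rw [← e2]
        exact getElem_congr_idx hmod

lemma iter_cSucc (i : ℕ) (hi : i ≤ c.length) :
    (cSucc c)^[i] v = gvt c hv i := by
  induction i with
  | zero => simp [gvt_zero]
  | succ m ih =>
    rw [Function.iterate_succ_apply', ih (by omega), cSucc_gvt c hc hv m (by omega)]

lemma cSucc_v : cSucc c v = gvt c hv 1 := by
  have := iter_cSucc c hc hv 1 (by have := hc.three_le_length; omega)
  simpa using this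

lemma cPred_v : cPred c v = gvt c hv (c.length - 1) := by
  have hn3 := hc.three_le_length
  have hTl := T_length c hc hv
  have hnd := T_nodup c hc hv
  have hrot : ((c.rotate v hv).support.tail) ~r c.support.tail := Walk.support_rotate c v hv
  have hvT : v ∈ ((c.rotate v hv).support.tail) := by
    have := gvt_mem_T c hc hv 0 (by omega)
    rwa [gvt_zero] at this
  have hvt : v ∈ c.support.tail := hrot.mem_iff.mp hvT
  rw [cPred, dif_pos hvt]
  rw [List.isRotated_prev_eq hrot.symm hc.support_nodup hvt]
  have hlt1 : c.length - 1 < List.length ((c.rotate v hv).support.tail) := by omega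
  have e1 : ((c.rotate v hv).support.tail).get ⟨c.length - 1, hlt1⟩ = v := by
    have h := gvt_repr c hc hv 0 (by omega)
    rw [mod_aux c.length 0 (by omega) (by omega), if_pos rfl] at h
    have := Option.some.inj ((List.getElem?_eq_getElem hlt1).symm.trans h)
    rwa [gvt_zero] at this
  have hprev := List.prev_getElem ((c.rotate v hv).support.tail) hnd (c.length - 1) hlt1
  have hmod : (c.length - 1 + (List.length ((c.rotate v hv).support.tail) - 1)) %
      List.length ((c.rotate v hv).support.tail) = c.length - 2 := by
    rw [hTl]
    have h4 : c.length - 1 + (c.length - 1) = (c.length - 2) + c.length := by omega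
    rw [h4, Nat.add_mod_right, Nat.mod_eq_of_lt (by omega)]
  have hlt2 : c.length - 2 < List.length ((c.rotate v hv).support.tail) := by omega
  have e2 : ((c.rotate v hv).support.tail).get ⟨c.length - 2, hlt2⟩ =
      gvt c hv (c.length - 1) := by
    have h := T_get c hc hv (c.length - 2) (by omega)
    have := Option.some.inj ((List.getElem?_eq_getElem hlt2).symm.trans h)
    refine this.trans ?_
    congr 1
    omega
  calc List.prev ((c.rotate v hv).support.tail) v hvT
      = List.prev ((c.rotate v hv).support.tail)
          (((c.rotate v hv).support.tail).get ⟨c.length - 1, hlt1⟩) (List.get_mem _ _) := by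
        congr 1; exact e1.symm
    _ = gvt c hv (c.length - 1) := by
        refine hprev.trans ?_
        have heq : (⟨(c.length - 1 + (List.length ((c.rotate v hv).support.tail) - 1)) %
            List.length ((c.rotate v hv).support.tail), Nat.mod_lt _ (by omega)⟩ :
            Fin (List.length ((c.rotate v hv).support.tail))) = ⟨c.length - 2, hlt2⟩ :=
          Fin.ext hmod
        rw [← e2]
        exact getElem_congr_idx hmod

omit hc in
lemma rotate_support_subset {z : V} (hz : z ∈ (c.rotate v hv).support) : z ∈ c.support := by
  rw [Walk.rotate, Walk.support_append] at hz
  rcases List.mem_append.mp hz with h | h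
  · exact Walk.support_dropUntil_subset_support c hv h
  · exact Walk.support_takeUntil_subset_support c hv (List.mem_of_mem_tail h)

omit hc in
lemma gvt_mem_support (i : ℕ) : gvt c hv i ∈ c.support := by
  apply rotate_support_subset c hv
  rw [Walk.mem_support_iff_exists_getVert]
  rcases le_or_gt i (c.rotate v hv).length with h | h
  · exact ⟨i, rfl, h⟩
  · refine ⟨(c.rotate v hv).length, ?_, le_rfl⟩
    rw [Walk.getVert_length, gvt, (c.rotate v hv).getVert_of_length_le (by omega : (c.rotate v hv).length ≤ i)]

omit hc in
lemma gvt_adj (i : ℕ) (hi : i < c.length) : G.Adj (gvt c hv i) (gvt c hv (i+1)) := by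
  apply (c.rotate v hv).adj_getVert_succ
  rwa [length_rotate' c hv]

/-- segment of the cycle from index i, l steps -/
def segT (i l : ℕ) (h : i + l ≤ c.length) : G.Walk (gvt c hv i) (gvt c hv (i+l)) :=
  seg (c.rotate v hv) i l (by rwa [length_rotate' c hv])

omit hc in
lemma segT_support (i l : ℕ) (h : i + l ≤ c.length) :
    (segT c hv i l h).support = (List.range (l+1)).map (fun s => gvt c hv (i + s)) :=
  seg_support (c.rotate v hv) i l _

end Coord

section Glue
open SimpleGraph
variable {G : SimpleGraph V}

lemma isPath_append' {x y z : V} {p : G.Walk x y} {q : G.Walk y z}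
    (hp : p.IsPath) (hq : q.IsPath) (hint : ∀ w, w ∈ p.support → w ∈ q.support → w = y) :
    (p.append q).IsPath := by
  rw [Walk.isPath_def, Walk.support_append]
  apply List.Nodup.append hp.support_nodup (hq.support_nodup.sublist (List.tail_sublist _))
  intro w hwp hwq
  have hwq' := List.mem_of_mem_tail hwq
  have hwy := hint w hwp hwq'
  subst hwy
  have hnd := hq.support_nodup
  rw [q.support_eq_cons] at hnd
  exact (List.nodup_cons.mp hnd).1 hwq

lemma no_longer [DecidableEq V] {a v : V} {c : G.Walk a a}
    (hc : IsLongestCycle G c) (hv : v ∈ c.support) {u : V} (hu : u ∉ c.support)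
    {X : V} (hX : G.Adj u X) (Q : G.Walk X u) (hQ : Q.IsPath)
    (he : s(u, X) ∉ Q.edges)
    (hcov : ∀ i, i < c.length → gvt c hv i ∈ Q.support) : False := by
  have hcyc := hc.1
  have hn3 := hcyc.three_le_length
  have hcyc' : (Walk.cons hX Q).IsCycle := (Walk.cons_isCycle_iff Q hX).mpr ⟨hQ, he⟩
  have hle := hc.2 u (Walk.cons hX Q) hcyc'
  rw [Walk.length_cons] at hle
  have hinj : Set.InjOn (fun i => gvt c hv i) ↑(Finset.range c.length) := by
    intro i hi j hj hij
    exact gvt_inj c hcyc hv (by simpa using hi) (by simpa using hj) hij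
  have hcard : (Finset.image (fun i => gvt c hv i) (Finset.range c.length)).card
      = c.length := by
    rw [Finset.card_image_of_injOn hinj, Finset.card_range]
  have huim : u ∉ Finset.image (fun i => gvt c hv i) (Finset.range c.length) := by
    intro h
    rcases Finset.mem_image.mp h with ⟨i, _, hgi⟩
    exact hu (hgi ▸ gvt_mem_support c hv i)
  have hsub : insert u (Finset.image (fun i => gvt c hv i) (Finset.range c.length))
      ⊆ Q.support.toFinset := by
    intro z hz
    rw [List.mem_toFinset]
    rcases Finset.mem_insert.mp hz with rfl | hz
    · exact Q.end_mem_support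
    · rcases Finset.mem_image.mp hz with ⟨i, hi, rfl⟩
      exact hcov i (Finset.mem_range.mp hi)
  have h1 := Finset.card_le_card hsub
  rw [Finset.card_insert_of_notMem huim, hcard] at h1
  have h2 := Q.support.toFinset_card_le
  have h3 := Q.length_support
  omega

end Glue

theorem stmt8 {V : Type*} [Fintype V] [DecidableEq V] (G : SimpleGraph V)
    (hn : 3 ≤ Fintype.card V) (htough : OneTough G) (hsig : Fintype.card V ≤ sigma3 G)
    (hham : ¬ G.IsHamiltonian) {a : V} (c : G.Walk a a) (hc : IsLongestCycle G c)
    (u v : V) (hu : u ∉ c.support) (hv : v ∈ c.support)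
    (huv1 : G.Adj u (cSucc c v)) (huv2 : G.Adj u (cPred c v))
    (B : Set V) (hB : B = G.neighborSet u ∪ G.neighborSet v) :
    ¬ ∃ b ∈ B, b ≠ cSucc c v ∧ b ≠ cPred c v ∧
      ∃ b' ∈ B, b' ∈ arc c v b ∧
        ∃ p : G.Walk (cSucc c v) b', p.IsPath ∧ {x | x ∈ p.support} = arc c v b := by
  rintro ⟨b, hbB, hbne1, hbne2, b', hb'B, hb'arc, p, hp, hpsupp⟩
  have hcyc := hc.1
  have hn3 := hcyc.three_le_length
  obtain ⟨t, k, ht0, htk, hkn, hkb, hb't⟩ := hb'arc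
  have hg : ∀ i, i ≤ c.length → (cSucc c)^[i] v = gvt c hv i :=
    fun i hi => iter_cSucc c hcyc hv i hi
  have hbk : b = gvt c hv k := by rw [← hkb, hg k (le_of_lt hkn)]
  have hb'g : b' = gvt c hv t := by rw [hb't, hg t (by omega)]
  subst hbk
  subst hb'g
  have hsv : cSucc c v = gvt c hv 1 := cSucc_v c hcyc hv
  have hpv : cPred c v = gvt c hv (c.length - 1) := cPred_v c hcyc hv
  have hinj : ∀ i j, i < c.length → j < c.length → gvt c hv i = gvt c hv j → i = j :=
    fun i j hi hj => gvt_inj c hcyc hv hi hj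
  have hgn : gvt c hv c.length = v := gvt_last c hcyc hv
  have hg0 : gvt c hv 0 = v := gvt_zero c hv
  have hinj1 : ∀ i j, 1 ≤ i → i ≤ c.length → 1 ≤ j → j ≤ c.length →
      gvt c hv i = gvt c hv j → i = j := by
    intro i j h1 h2 h3 h4 hij
    by_cases hi : i = c.length <;> by_cases hj : j = c.length
    · omega
    · exfalso
      subst hi
      have hij' : gvt c hv 0 = gvt c hv j := hg0.trans (hgn.symm.trans hij)
      have := hinj 0 j (by omega) (by omega) hij'
      omega
    · exfalso
      subst hj
      have hij' : gvt c hv i = gvt c hv 0 := hij.trans (hgn.trans hg0.symm)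
      have := hinj i 0 (by omega) (by omega) hij'
      omega
    · exact hinj i j (by omega) (by omega) hij
  have hk2 : 2 ≤ k := by omega
  have hkn2 : k ≤ c.length - 2 := by
    by_contra h
    have hk1 : k = c.length - 1 := by omega
    exact hbne2 (by rw [hpv, ← hk1])
  have harc : ∀ z, z ∈ arc c v (gvt c hv k) ↔ ∃ j, 0 < j ∧ j < k ∧ z = gvt c hv j := by
    intro z
    constructor
    · rintro ⟨i', k', h1, h2, h3, h4, rfl⟩
      have hkk : k' = k := hinj k' k h3 hkn (by rw [← hg k' (le_of_lt h3), h4])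
      exact ⟨i', h1, by omega, (hg i' (by omega)).symm ▸ rfl⟩
    · rintro ⟨j, h1, h2, rfl⟩
      exact ⟨j, k, h1, h2, hkn, hkb, (hg j (by omega)).symm⟩
  have hps : ∀ z, z ∈ p.support ↔ ∃ j, 0 < j ∧ j < k ∧ z = gvt c hv j := by
    intro z
    have h1 : z ∈ p.support ↔ z ∈ arc c v (gvt c hv k) := by
      rw [← hpsupp]; rfl
    exact h1.trans (harc z)
  have hune : ∀ i, u ≠ gvt c hv i := fun i h => hu (h ▸ gvt_mem_support c hv i)
  have hunev : u ≠ v := by have := hune 0; rwa [hg0] at this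
  -- adjacency facts
  have ha1 : G.Adj v (gvt c hv 1) := by
    have := gvt_adj c hv 0 (by omega); rwa [hg0] at this
  have ha2 : G.Adj (gvt c hv (c.length - 1)) v := by
    have := gvt_adj c hv (c.length - 1) (by omega)
    rwa [show c.length - 1 + 1 = c.length from by omega, hgn] at this
  have hu1 : G.Adj u (gvt c hv 1) := by rwa [hsv] at huv1
  have hu2 : G.Adj u (gvt c hv (c.length - 1)) := by rwa [hpv] at huv2
  rw [hB] at hbB hb'B
  have hb_adj : G.Adj u (gvt c hv k) ∨ G.Adj v (gvt c hv k) := by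
    simpa [SimpleGraph.mem_neighborSet] using hbB
  have hb'_adj : G.Adj u (gvt c hv t) ∨ G.Adj v (gvt c hv t) := by
    simpa [SimpleGraph.mem_neighborSet] using hb'B
  -- the path P
  obtain ⟨P, hPmem, hPpath⟩ : ∃ P : G.Walk (gvt c hv 1) (gvt c hv t),
      (∀ z, z ∈ P.support ↔ ∃ j, 0 < j ∧ j < k ∧ z = gvt c hv j) ∧ P.IsPath := by
    refine ⟨p.copy hsv rfl, ?_, (p.isPath_copy hsv rfl).mpr hp⟩
    intro z
    rw [SimpleGraph.Walk.support_copy]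
    exact hps z
  have hvP : v ∉ P.support := by
    intro h
    rcases (hPmem v).mp h with ⟨j, h1, h2, hj⟩
    have := hinj 0 j (by omega) (by omega) (hg0.trans hj)
    omega
  have huP : u ∉ P.support := by
    intro h
    rcases (hPmem u).mp h with ⟨j, _, _, hj⟩
    exact hune j hj
  -- the segment S from b to v (the rest of the cycle)
  obtain ⟨S, hSmem, hSpath⟩ : ∃ S : G.Walk (gvt c hv k) v,
      (∀ z, z ∈ S.support ↔ ∃ j, k ≤ j ∧ j ≤ c.length ∧ z = gvt c hv j) ∧ S.IsPath := by
    have hSend : gvt c hv (k + (c.length - k)) = v := by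
      rw [show k + (c.length - k) = c.length from by omega]; exact hgn
    refine ⟨(segT c hv k (c.length - k) (by omega)).copy rfl hSend, ?_, ?_⟩
    · intro z
      rw [SimpleGraph.Walk.support_copy, segT_support]
      constructor
      · intro hz
        rcases List.mem_map.mp hz with ⟨s', hs', hz'⟩
        have := List.mem_range.mp hs'
        exact ⟨k + s', by omega, by omega, hz'.symm⟩
      · rintro ⟨j, h1, h2, rfl⟩
        exact List.mem_map.mpr ⟨j - k, List.mem_range.mpr (by omega),
          by rw [show k + (j - k) = j from by omega]⟩
    · rw [SimpleGraph.Walk.isPath_def, SimpleGraph.Walk.support_copy, segT_support]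
      refine List.nodup_range.map_on ?_
      intro x hx y hy hxy
      have hx' := List.mem_range.mp hx
      have hy' := List.mem_range.mp hy
      have := hinj1 (k + x) (k + y) (by omega) (by omega) (by omega) (by omega) hxy
      omega
  -- the segment S1 from b to v⁻
  obtain ⟨S1, hS1mem, hS1path⟩ : ∃ S1 : G.Walk (gvt c hv k) (gvt c hv (c.length - 1)),
      (∀ z, z ∈ S1.support ↔ ∃ j, k ≤ j ∧ j ≤ c.length - 1 ∧ z = gvt c hv j) ∧
        S1.IsPath := by
    have hSend : gvt c hv (k + (c.length - 1 - k)) = gvt c hv (c.length - 1) := by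
      congr 1; omega
    refine ⟨(segT c hv k (c.length - 1 - k) (by omega)).copy rfl hSend, ?_, ?_⟩
    · intro z
      rw [SimpleGraph.Walk.support_copy, segT_support]
      constructor
      · intro hz
        rcases List.mem_map.mp hz with ⟨s', hs', hz'⟩
        have := List.mem_range.mp hs'
        exact ⟨k + s', by omega, by omega, hz'.symm⟩
      · rintro ⟨j, h1, h2, rfl⟩
        exact List.mem_map.mpr ⟨j - k, List.mem_range.mpr (by omega),
          by rw [show k + (j - k) = j from by omega]⟩
    · rw [SimpleGraph.Walk.isPath_def, SimpleGraph.Walk.support_copy, segT_support]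
      refine List.nodup_range.map_on ?_
      intro x hx y hy hxy
      have hx' := List.mem_range.mp hx
      have hy' := List.mem_range.mp hy
      have := hinj1 (k + x) (k + y) (by omega) (by omega) (by omega) (by omega) hxy
      omega
  have huS : u ∉ S.support := by
    intro h; rcases (hSmem u).mp h with ⟨j, _, _, hj⟩; exact hune j hj
  have huS1 : u ∉ S1.support := by
    intro h; rcases (hS1mem u).mp h with ⟨j, _, _, hj⟩; exact hune j hj
  have hvS1 : v ∉ S1.support := by
    intro h
    rcases (hS1mem v).mp h with ⟨j, h1, h2, hj⟩
    have := hinj 0 j (by omega) (by omega) (hg0.trans hj)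
    omega
  -- case analysis
  rcases hb_adj with hub | hvb <;> rcases hb'_adj with hub' | hvb'
  · -- Case 3 : u ~ b, u ~ b'
    refine no_longer hc hv hu hub
      (S.append ((SimpleGraph.Walk.cons ha1 P).append
        (SimpleGraph.Walk.cons hub'.symm SimpleGraph.Walk.nil))) ?_ ?_ ?_
    · -- path
      apply isPath_append' hSpath
      · apply isPath_append'
        · exact (SimpleGraph.Walk.cons_isPath_iff _ _).mpr ⟨hPpath, hvP⟩
        · refine (SimpleGraph.Walk.cons_isPath_iff _ _).mpr ⟨SimpleGraph.Walk.IsPath.nil, ?_⟩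
          simp only [SimpleGraph.Walk.support_nil, List.mem_singleton]
          exact fun h => hune t h.symm
        · intro w hw1 hw2
          simp only [SimpleGraph.Walk.support_cons, SimpleGraph.Walk.support_nil,
            List.mem_cons, List.mem_singleton, List.not_mem_nil, or_false] at hw2
          rcases hw2 with h | h
          · exact h
          · exfalso
            subst h
            simp only [SimpleGraph.Walk.support_cons, List.mem_cons] at hw1
            rcases hw1 with h | h
            · exact hunev h
            · exact huP h
      · intro w hw1 hw2
        rcases (hSmem w).mp hw1 with ⟨j, hj1, hj2, rfl⟩
        rw [SimpleGraph.Walk.mem_support_append_iff] at hw2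
        rcases hw2 with h | h
        · simp only [SimpleGraph.Walk.support_cons, List.mem_cons] at h
          rcases h with h | h
          · exact h
          · exfalso
            rcases (hPmem _).mp h with ⟨j', hj1', hj2', hj'⟩
            rcases Nat.lt_or_ge j c.length with hjn | hjn
            · have := hinj j j' hjn (by omega) hj'
              omega
            · have hjeq : j = c.length := by omega
              subst hjeq
              rw [hgn] at hj'
              have := hinj 0 j' (by omega) (by omega) (hg0.trans hj')
              omega
        · exfalso
          simp only [SimpleGraph.Walk.support_cons, SimpleGraph.Walk.support_nil,
            List.mem_cons, List.mem_singleton, List.not_mem_nil, or_false] at h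
          rcases h with h | h
          · rcases Nat.lt_or_ge j c.length with hjn | hjn
            · have := hinj j t hjn (by omega) h
              omega
            · have hjeq : j = c.length := by omega
              subst hjeq
              rw [hgn] at h
              have := hinj 0 t (by omega) (by omega) (hg0.trans h)
              omega
          · exact hune j h.symm
    · -- edge
      intro hmem
      rw [SimpleGraph.Walk.edges_append, List.mem_append] at hmem
      rcases hmem with hmem | hmem
      · exact huS (SimpleGraph.Walk.fst_mem_support_of_mem_edges S hmem)
      · rw [SimpleGraph.Walk.edges_append, List.mem_append] at hmem
        rcases hmem with hmem | hmem
        · have hmm := SimpleGraph.Walk.fst_mem_support_of_mem_edges _ hmem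
          simp only [SimpleGraph.Walk.support_cons, List.mem_cons] at hmm
          rcases hmm with h | h
          · exact hunev h
          · exact huP h
        · simp only [SimpleGraph.Walk.edges_cons, SimpleGraph.Walk.edges_nil,
            List.mem_singleton, List.not_mem_nil, or_false, List.mem_cons] at hmem
          rcases Sym2.eq_iff.mp hmem with ⟨h1, h2⟩ | ⟨h1, h2⟩
          · exact hune t h1
          · have := hinj k t (by omega) (by omega) h2
            omega
    · -- coverage
      intro i hi
      rw [SimpleGraph.Walk.mem_support_append_iff]
      rcases Nat.lt_or_ge i 1 with h1 | h1
      · left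
        have : i = 0 := by omega
        subst this
        rw [hg0]
        exact (hSmem v).mpr ⟨c.length, by omega, le_rfl, hgn.symm⟩
      · rcases Nat.lt_or_ge i k with h2 | h2
        · right
          rw [SimpleGraph.Walk.mem_support_append_iff]
          left
          simp only [SimpleGraph.Walk.support_cons, List.mem_cons]
          exact Or.inr ((hPmem _).mpr ⟨i, by omega, h2, rfl⟩)
        · left
          exact (hSmem _).mpr ⟨i, h2, by omega, rfl⟩
  · -- Case 2 : u ~ b, v ~ b'
    refine no_longer hc hv hu hub
      (S.append (SimpleGraph.Walk.cons hvb' (P.reverse.append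
        (SimpleGraph.Walk.cons hu1.symm SimpleGraph.Walk.nil)))) ?_ ?_ ?_
    · -- path
      apply isPath_append' hSpath
      · rw [SimpleGraph.Walk.cons_isPath_iff]
        constructor
        · apply isPath_append' hPpath.reverse
          · refine (SimpleGraph.Walk.cons_isPath_iff _ _).mpr ⟨SimpleGraph.Walk.IsPath.nil, ?_⟩
            simp only [SimpleGraph.Walk.support_nil, List.mem_singleton]
            exact fun h => hune 1 h.symm
          · intro w hw1 hw2
            simp only [SimpleGraph.Walk.support_cons, SimpleGraph.Walk.support_nil,
              List.mem_cons, List.mem_singleton, List.not_mem_nil, or_false] at hw2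
            rcases hw2 with h | h
            · exact h
            · exfalso
              subst h
              rw [SimpleGraph.Walk.support_reverse, List.mem_reverse] at hw1
              exact huP hw1
        · intro h
          rw [SimpleGraph.Walk.mem_support_append_iff] at h
          rcases h with h | h
          · rw [SimpleGraph.Walk.support_reverse, List.mem_reverse] at h
            exact hvP h
          · simp only [SimpleGraph.Walk.support_cons, SimpleGraph.Walk.support_nil,
              List.mem_cons, List.mem_singleton, List.not_mem_nil, or_false] at h
            rcases h with h | h
            · have := hinj 0 1 (by omega) (by omega) (hg0.trans h)
              omega
            · exact hunev h.symm
      · intro w hw1 hw2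
        rcases (hSmem w).mp hw1 with ⟨j, hj1, hj2, rfl⟩
        simp only [SimpleGraph.Walk.support_cons, List.mem_cons] at hw2
        rcases hw2 with h | h
        · exact h
        · exfalso
          rw [SimpleGraph.Walk.mem_support_append_iff] at h
          rcases h with h | h
          · rw [SimpleGraph.Walk.support_reverse, List.mem_reverse] at h
            rcases (hPmem _).mp h with ⟨j', hj1', hj2', hj'⟩
            rcases Nat.lt_or_ge j c.length with hjn | hjn
            · have := hinj j j' hjn (by omega) hj'
              omega
            · have hjeq : j = c.length := by omega
              subst hjeq
              rw [hgn] at hj'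
              have := hinj 0 j' (by omega) (by omega) (hg0.trans hj')
              omega
          · simp only [SimpleGraph.Walk.support_cons, SimpleGraph.Walk.support_nil,
              List.mem_cons, List.mem_singleton, List.not_mem_nil, or_false] at h
            rcases h with h | h
            · rcases Nat.lt_or_ge j c.length with hjn | hjn
              · have := hinj j 1 hjn (by omega) h
                omega
              · have hjeq : j = c.length := by omega
                subst hjeq
                rw [hgn] at h
                have := hinj 0 1 (by omega) (by omega) (hg0.trans h)
                omega
            · exact hune j h.symm
    · -- edge
      intro hmem
      rw [SimpleGraph.Walk.edges_append, List.mem_append] at hmem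
      rcases hmem with hmem | hmem
      · exact huS (SimpleGraph.Walk.fst_mem_support_of_mem_edges S hmem)
      · rw [SimpleGraph.Walk.edges_cons, List.mem_cons] at hmem
        rcases hmem with hmem | hmem
        · rcases Sym2.eq_iff.mp hmem with ⟨h1, h2⟩ | ⟨h1, h2⟩
          · exact hunev h1
          · exact hune t h1
        · rw [SimpleGraph.Walk.edges_append, List.mem_append] at hmem
          rcases hmem with hmem | hmem
          · have := SimpleGraph.Walk.fst_mem_support_of_mem_edges _ hmem
            rw [SimpleGraph.Walk.support_reverse, List.mem_reverse] at this
            exact huP this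
          · simp only [SimpleGraph.Walk.edges_cons, SimpleGraph.Walk.edges_nil,
              List.mem_singleton, List.not_mem_nil, or_false, List.mem_cons] at hmem
            rcases Sym2.eq_iff.mp hmem with ⟨h1, h2⟩ | ⟨h1, h2⟩
            · exact hune 1 h1
            · have := hinj k 1 (by omega) (by omega) h2
              omega
    · -- coverage
      intro i hi
      rw [SimpleGraph.Walk.mem_support_append_iff]
      rcases Nat.lt_or_ge i 1 with h1 | h1
      · left
        have : i = 0 := by omega
        subst this
        rw [hg0]
        exact (hSmem v).mpr ⟨c.length, by omega, le_rfl, hgn.symm⟩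
      · rcases Nat.lt_or_ge i k with h2 | h2
        · right
          simp only [SimpleGraph.Walk.support_cons, List.mem_cons]
          right
          rw [SimpleGraph.Walk.mem_support_append_iff]
          left
          rw [SimpleGraph.Walk.support_reverse, List.mem_reverse]
          exact (hPmem _).mpr ⟨i, by omega, h2, rfl⟩
        · left
          exact (hSmem _).mpr ⟨i, h2, by omega, rfl⟩
  · -- Case 1 : v ~ b, u ~ b'
    refine no_longer hc hv hu hu2
      (S1.reverse.append ((SimpleGraph.Walk.cons hvb.symm (SimpleGraph.Walk.cons ha1 P)).append
        (SimpleGraph.Walk.cons hub'.symm SimpleGraph.Walk.nil))) ?_ ?_ ?_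
    · -- path
      apply isPath_append' hS1path.reverse
      · apply isPath_append'
        · rw [SimpleGraph.Walk.cons_isPath_iff]
          constructor
          · exact (SimpleGraph.Walk.cons_isPath_iff _ _).mpr ⟨hPpath, hvP⟩
          · simp only [SimpleGraph.Walk.support_cons, List.mem_cons]
            rintro (h | h)
            · have := hinj k 0 (by omega) (by omega) (by rw [hg0]; exact h)
              omega
            · rcases (hPmem _).mp h with ⟨j', hj1', hj2', hj'⟩
              have := hinj k j' (by omega) (by omega) hj'
              omega
        · refine (SimpleGraph.Walk.cons_isPath_iff _ _).mpr ⟨SimpleGraph.Walk.IsPath.nil, ?_⟩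
          simp only [SimpleGraph.Walk.support_nil, List.mem_singleton]
          exact fun h => hune t h.symm
        · intro w hw1 hw2
          simp only [SimpleGraph.Walk.support_cons, SimpleGraph.Walk.support_nil,
            List.mem_cons, List.mem_singleton, List.not_mem_nil, or_false] at hw2
          rcases hw2 with h | h
          · exact h
          · exfalso
            subst h
            simp only [SimpleGraph.Walk.support_cons, List.mem_cons] at hw1
            rcases hw1 with h | h
            · exact hune k h
            · rcases h with h | h
              · exact hunev h
              · exact huP h
      · intro w hw1 hw2
        rw [SimpleGraph.Walk.support_reverse, List.mem_reverse] at hw1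
        rcases (hS1mem w).mp hw1 with ⟨j, hj1, hj2, rfl⟩
        rw [SimpleGraph.Walk.mem_support_append_iff] at hw2
        rcases hw2 with h | h
        · simp only [SimpleGraph.Walk.support_cons, List.mem_cons] at h
          rcases h with h | h
          · exact h
          · exfalso
            rcases h with h | h
            · have := hinj j 0 (by omega) (by omega) (by rw [hg0]; exact h)
              omega
            · rcases (hPmem _).mp h with ⟨j', hj1', hj2', hj'⟩
              have := hinj j j' (by omega) (by omega) hj'
              omega
        · exfalso
          simp only [SimpleGraph.Walk.support_cons, SimpleGraph.Walk.support_nil,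
            List.mem_cons, List.mem_singleton, List.not_mem_nil, or_false] at h
          rcases h with h | h
          · have := hinj j t (by omega) (by omega) h
            omega
          · exact hune j h.symm
    · -- edge
      intro hmem
      rw [SimpleGraph.Walk.edges_append, List.mem_append] at hmem
      rcases hmem with hmem | hmem
      · have := SimpleGraph.Walk.fst_mem_support_of_mem_edges _ hmem
        rw [SimpleGraph.Walk.support_reverse, List.mem_reverse] at this
        exact huS1 this
      · rw [SimpleGraph.Walk.edges_append, List.mem_append] at hmem
        rcases hmem with hmem | hmem
        · have := SimpleGraph.Walk.fst_mem_support_of_mem_edges _ hmem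
          simp only [SimpleGraph.Walk.support_cons, List.mem_cons] at this
          rcases this with h | h
          · exact hune k h
          · rcases h with h | h
            · exact hunev h
            · exact huP h
        · simp only [SimpleGraph.Walk.edges_cons, SimpleGraph.Walk.edges_nil,
            List.mem_singleton, List.not_mem_nil, or_false, List.mem_cons] at hmem
          rcases Sym2.eq_iff.mp hmem with ⟨h1, h2⟩ | ⟨h1, h2⟩
          · exact hune t h1
          · have := hinj (c.length - 1) t (by omega) (by omega) h2
            omega
    · -- coverage
      intro i hi
      rw [SimpleGraph.Walk.mem_support_append_iff]
      rcases Nat.lt_or_ge i 1 with h1 | h1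
      · right
        have : i = 0 := by omega
        subst this
        rw [hg0]
        rw [SimpleGraph.Walk.mem_support_append_iff]
        left
        simp only [SimpleGraph.Walk.support_cons, List.mem_cons]
        exact Or.inr (Or.inl trivial)
      · rcases Nat.lt_or_ge i k with h2 | h2
        · right
          rw [SimpleGraph.Walk.mem_support_append_iff]
          left
          simp only [SimpleGraph.Walk.support_cons, List.mem_cons]
          exact Or.inr (Or.inr ((hPmem _).mpr ⟨i, by omega, h2, rfl⟩))
        · left
          rw [SimpleGraph.Walk.support_reverse, List.mem_reverse]
          exact (hS1mem _).mpr ⟨i, h2, by omega, rfl⟩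
  · -- Case 4 : v ~ b, v ~ b'
    refine no_longer hc hv hu hu1
      (P.append (SimpleGraph.Walk.cons hvb'.symm (SimpleGraph.Walk.cons hvb
        (S1.append (SimpleGraph.Walk.cons hu2.symm SimpleGraph.Walk.nil))))) ?_ ?_ ?_
    · -- path
      apply isPath_append' hPpath
      · rw [SimpleGraph.Walk.cons_isPath_iff]
        constructor
        · rw [SimpleGraph.Walk.cons_isPath_iff]
          constructor
          · apply isPath_append' hS1path
            · refine (SimpleGraph.Walk.cons_isPath_iff _ _).mpr ⟨SimpleGraph.Walk.IsPath.nil, ?_⟩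
              simp only [SimpleGraph.Walk.support_nil, List.mem_singleton]
              exact fun h => hune (c.length - 1) h.symm
            · intro w hw1 hw2
              simp only [SimpleGraph.Walk.support_cons, SimpleGraph.Walk.support_nil,
                List.mem_cons, List.mem_singleton, List.not_mem_nil, or_false] at hw2
              rcases hw2 with h | h
              · exact h
              · exfalso
                subst h
                exact huS1 hw1
          · intro h
            rw [SimpleGraph.Walk.mem_support_append_iff] at h
            rcases h with h | h
            · exact hvS1 h
            · simp only [SimpleGraph.Walk.support_cons, SimpleGraph.Walk.support_nil,
                List.mem_cons, List.mem_singleton, List.not_mem_nil, or_false] at h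
              rcases h with h | h
              · have := hinj 0 (c.length - 1) (by omega) (by omega) (hg0.trans h)
                omega
              · exact hunev h.symm
        · simp only [SimpleGraph.Walk.support_cons, List.mem_cons]
          rintro (h | h)
          · have := hinj t 0 (by omega) (by omega) (by rw [hg0]; exact h)
            omega
          · rw [SimpleGraph.Walk.mem_support_append_iff] at h
            rcases h with h | h
            · rcases (hS1mem _).mp h with ⟨j, hj1, hj2, hj⟩
              have := hinj t j (by omega) (by omega) hj
              omega
            · simp only [SimpleGraph.Walk.support_cons, SimpleGraph.Walk.support_nil,
                List.mem_cons, List.mem_singleton, List.not_mem_nil, or_false] at h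
              rcases h with h | h
              · have := hinj t (c.length - 1) (by omega) (by omega) h
                omega
              · exact hune t h.symm
      · intro w hw1 hw2
        simp only [SimpleGraph.Walk.support_cons, List.mem_cons] at hw2
        rcases hw2 with h | h
        · exact h
        · exfalso
          rcases (hPmem w).mp hw1 with ⟨j, hj1, hj2, rfl⟩
          rcases h with h | h
          · have := hinj j 0 (by omega) (by omega) (by rw [hg0]; exact h)
            omega
          · rw [SimpleGraph.Walk.mem_support_append_iff] at h
            rcases h with h | h
            · rcases (hS1mem _).mp h with ⟨j', hj1', hj2', hj'⟩
              have := hinj j j' (by omega) (by omega) hj'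
              omega
            · simp only [SimpleGraph.Walk.support_cons, SimpleGraph.Walk.support_nil,
                List.mem_cons, List.mem_singleton, List.not_mem_nil, or_false] at h
              rcases h with h | h
              · have := hinj j (c.length - 1) (by omega) (by omega) h
                omega
              · exact hune j h.symm
    · -- edge
      intro hmem
      rw [SimpleGraph.Walk.edges_append, List.mem_append] at hmem
      rcases hmem with hmem | hmem
      · exact huP (SimpleGraph.Walk.fst_mem_support_of_mem_edges P hmem)
      · rw [SimpleGraph.Walk.edges_cons, List.mem_cons] at hmem
        rcases hmem with hmem | hmem
        · rcases Sym2.eq_iff.mp hmem with ⟨h1, h2⟩ | ⟨h1, h2⟩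
          · exact hune t h1
          · exact hunev h1
        · rw [SimpleGraph.Walk.edges_cons, List.mem_cons] at hmem
          rcases hmem with hmem | hmem
          · rcases Sym2.eq_iff.mp hmem with ⟨h1, h2⟩ | ⟨h1, h2⟩
            · exact hunev h1
            · exact hune k h1
          · rw [SimpleGraph.Walk.edges_append, List.mem_append] at hmem
            rcases hmem with hmem | hmem
            · exact huS1 (SimpleGraph.Walk.fst_mem_support_of_mem_edges S1 hmem)
            · simp only [SimpleGraph.Walk.edges_cons, SimpleGraph.Walk.edges_nil,
                List.mem_singleton, List.not_mem_nil, or_false, List.mem_cons] at hmem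
              rcases Sym2.eq_iff.mp hmem with ⟨h1, h2⟩ | ⟨h1, h2⟩
              · exact hune (c.length - 1) h1
              · have := hinj 1 (c.length - 1) (by omega) (by omega) h2
                omega
    · -- coverage
      intro i hi
      rw [SimpleGraph.Walk.mem_support_append_iff]
      rcases Nat.lt_or_ge i 1 with h1 | h1
      · right
        have : i = 0 := by omega
        subst this
        rw [hg0]
        simp only [SimpleGraph.Walk.support_cons, List.mem_cons]
        exact Or.inr (Or.inl trivial)
      · rcases Nat.lt_or_ge i k with h2 | h2
        · left
          exact (hPmem _).mpr ⟨i, by omega, h2, rfl⟩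
        · right
          simp only [SimpleGraph.Walk.support_cons, List.mem_cons]
          right
          right
          rw [SimpleGraph.Walk.mem_support_append_iff]
          left
          exact (hS1mem _).mpr ⟨i, h2, by omega, rfl⟩


end
end Paper
end

section
/- In the standard setup, suppose a = b_i⁺ and c = b_j⁻ are distinct with i < j and ac ∈ E(G). If some vertex x ∈ N(u) ∩ N(v) lies on the arc of C strictly between a and c (from a⁺ to c⁻), then none of x⁺v⁺, x⁺v⁻, x⁻v⁺, x⁻v⁻ is an edge of G. -/
open scoped Classical

namespace Paper

noncomputable section

variable {V : Type*}

section Aux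

open SimpleGraph

variable {G : SimpleGraph V}

def mkWalk (G : SimpleGraph V) : ∀ (l : List V) (x y : V),
    List.Chain G.Adj x (l ++ [y]) → G.Walk x y
  | [], x, y, h => Walk.cons (by simpa using (List.chain_cons.mp h).1) Walk.nil
  | z :: l, x, y, h =>
      Walk.cons (List.chain_cons.mp h).1 (mkWalk G l z y (List.chain_cons.mp h).2)

@[simp] lemma support_mkWalk (G : SimpleGraph V) (l : List V) (x y : V)
    (h : List.Chain G.Adj x (l ++ [y])) :
    (mkWalk G l x y h).support = x :: (l ++ [y]) := by
  induction l generalizing x with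
  | nil => simp [mkWalk]
  | cons z l ih => simp [mkWalk]; exact ih _ _

@[simp] lemma length_mkWalk (G : SimpleGraph V) (l : List V) (x y : V)
    (h : List.Chain G.Adj x (l ++ [y])) :
    (mkWalk G l x y h).length = l.length + 1 := by
  induction l generalizing x with
  | nil => simp [mkWalk]
  | cons z l ih => simp [mkWalk]; exact ih _ _

lemma closing_not_mem {G : SimpleGraph V} {b u : V} (w : G.Walk b u)
    (hlen : 2 ≤ w.length) (hnd : w.support.Nodup) : s(u, b) ∉ w.edges := by
  cases w with
  | nil => simp at hlen
  | @cons _ z _ h₁ w₂ =>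
    intro hmem
    rw [Walk.edges_cons, List.mem_cons] at hmem
    rw [Walk.support_cons, List.nodup_cons] at hnd
    rcases hmem with hmem | hmem
    · rw [Sym2.eq_iff] at hmem
      rcases hmem with ⟨hub, hbz⟩ | ⟨huz, -⟩
      · exact hnd.1 (hub ▸ w₂.end_mem_support)
      · subst huz
        cases w₂ with
        | nil => simp at hlen
        | @cons _ z' _ h₃ w₄ =>
          rw [Walk.support_cons, List.nodup_cons] at hnd
          exact hnd.2.1 (by simp)
    · exact hnd.1 (Walk.snd_mem_support_of_mem_edges w₂ hmem)

lemma no_longer_s16 {G : SimpleGraph V} {a : V} {c : G.Walk a a} (hc : IsLongestCycle G c)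
    (u : V) (body : List V)
    (h : List.Chain G.Adj u (body ++ [u])) (hnd : (u :: body).Nodup)
    (hlen2 : 2 ≤ body.length) (hlen : c.length < body.length + 1) : False := by
  obtain ⟨b, l, rfl⟩ : ∃ b l, body = b :: l := by
    cases body with
    | nil => simp at hlen2
    | cons b l => exact ⟨b, l, rfl⟩
  have h' := (List.chain_cons.mp h)
  have hadj : G.Adj u b := h'.1
  have hsup : (mkWalk G l b u h'.2).support = b :: (l ++ [u]) := support_mkWalk G l b u h'.2
  have hndsup : (mkWalk G l b u h'.2).support.Nodup := by
    rw [hsup]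
    simp only [List.nodup_cons, List.mem_cons, List.mem_append] at hnd ⊢
    refine ⟨?_, ?_⟩
    · rintro (h1 | h1)
      · exact hnd.2.1 h1
      · rcases h1 with rfl | h1
        · exact hnd.1 (Or.inl rfl)
        · simp at h1
    · rw [List.nodup_append']
      refine ⟨hnd.2.2, by simp, ?_⟩
      intro t ht; rw [List.mem_singleton]; rintro rfl
      exact hnd.1 (Or.inr ht)
  have hpath : (mkWalk G l b u h'.2).IsPath := SimpleGraph.Walk.IsPath.mk' hndsup
  have hl1 : (mkWalk G l b u h'.2).length = l.length + 1 := length_mkWalk G l b u h'.2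
  have hlen2' : 1 ≤ l.length := by simpa using hlen2
  have hclose : s(u, b) ∉ (mkWalk G l b u h'.2).edges :=
    closing_not_mem _ (by omega) hndsup
  have hcyc : (Walk.cons hadj (mkWalk G l b u h'.2)).IsCycle :=
    SimpleGraph.Path.cons_isCycle ⟨_, hpath⟩ hadj hclose
  have hle := hc.2 u (Walk.cons hadj (mkWalk G l b u h'.2)) hcyc
  rw [Walk.length_cons, hl1] at hle
  simp only [List.length_cons] at hlen
  omega


section WithDec

variable [DecidableEq V] {a : V}

/-- coordinate function along the cycle, based at `v`. -/
def gf (c : G.Walk a a) (v : V) : ℕ → V :=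
  fun i => c.support.tail.getD ((c.support.tail.idxOf v + i) % c.length) v

lemma support_getVert' {x y : V} (p : G.Walk x y) (i : ℕ) (h : i < p.support.length) :
    p.support[i] = p.getVert i := by
  induction p generalizing i with
  | nil => simp at h; subst h; simp [Walk.getVert_zero]
  | cons hadj q ih =>
    cases i with
    | zero => simp [Walk.getVert_zero]
    | succ n =>
      simp only [Walk.support_cons, List.getElem_cons_succ, Walk.getVert_cons_succ]
      exact ih n (by simpa [Walk.support_cons, List.length_cons] using h)

lemma tail_getVert {x y : V} (p : G.Walk x y) (i : ℕ) (h : i < p.support.tail.length) :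
    p.support.tail[i] = p.getVert (i + 1) := by
  cases p with
  | nil => simp at h
  | cons hadj q =>
    simp only [Walk.support_cons, List.tail_cons] at h ⊢
    rw [support_getVert' q i (by simpa using h), Walk.getVert_cons_succ]

section coord

variable (c : G.Walk a a) (v : V)

lemma len_tail : c.support.tail.length = c.length := by
  have := c.length_support
  have h2 : c.support.tail.length = c.support.length - 1 := by
    simp [List.length_tail]
  omega

lemma L_pos (hcyc : c.IsCycle) : 0 < c.length := by
  have := hcyc.three_le_length; omega

lemma a_mem_tail (hcyc : c.IsCycle) : a ∈ c.support.tail := by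
  have h3 := hcyc.three_le_length
  have hlt : c.length - 1 < c.support.tail.length := by rw [len_tail]; omega
  have := tail_getVert c (c.length - 1) hlt
  have h2 : c.length - 1 + 1 = c.length := by omega
  rw [h2, Walk.getVert_length] at this
  have hmem := List.getElem_mem hlt
  rw [this] at hmem
  exact hmem

lemma mem_tail_of_mem_support (hcyc : c.IsCycle) (hx : v ∈ c.support) :
    v ∈ c.support.tail := by
  rw [c.support_eq_cons, List.mem_cons] at hx
  rcases hx with rfl | hx
  · exact a_mem_tail c hcyc
  · exact hx

lemma gf_lt (hcyc : c.IsCycle) (i : ℕ) :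
    (c.support.tail.idxOf v + i) % c.length < c.support.tail.length := by
  rw [len_tail]; exact Nat.mod_lt _ (L_pos c hcyc)

lemma gf_getElem (hcyc : c.IsCycle) (i : ℕ) :
    gf c v i = c.support.tail[(c.support.tail.idxOf v + i) % c.length]'(gf_lt c v hcyc i) := by
  rw [gf, List.getD_eq_getElem _ _ (gf_lt c v hcyc i)]

lemma gf_mem (hcyc : c.IsCycle) (i : ℕ) : gf c v i ∈ c.support.tail := by
  rw [gf_getElem c v hcyc]; exact List.getElem_mem _

lemma gf_mem_support (hcyc : c.IsCycle) (i : ℕ) : gf c v i ∈ c.support := by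
  rw [c.support_eq_cons]; exact List.mem_cons_of_mem _ (gf_mem c v hcyc i)

lemma gf_zero (hcyc : c.IsCycle) (hv : v ∈ c.support.tail) : gf c v 0 = v := by
  have hiv : c.support.tail.idxOf v < c.length := by
    rw [← len_tail]; exact List.idxOf_lt_length_iff.2 hv
  rw [gf, Nat.add_zero, Nat.mod_eq_of_lt hiv,
    List.getD_eq_getElem _ _ (by rw [len_tail]; exact hiv), List.getElem_idxOf]

lemma gf_getVert (hcyc : c.IsCycle) (i : ℕ) :
    gf c v i = c.getVert ((c.support.tail.idxOf v + i) % c.length + 1) := by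
  rw [gf_getElem c v hcyc, tail_getVert]

lemma gf_adj (hcyc : c.IsCycle) (i : ℕ) : G.Adj (gf c v i) (gf c v (i + 1)) := by
  set L := c.length with hL
  have hLpos : 0 < L := L_pos c hcyc
  set j := (c.support.tail.idxOf v + i) % L with hj
  have hjlt : j < L := Nat.mod_lt _ hLpos
  have hnext : (c.support.tail.idxOf v + (i + 1)) % L = (j + 1) % L := by
    rw [hj, ← Nat.add_assoc, Nat.mod_add_mod]
  rw [gf_getVert c v hcyc, gf_getVert c v hcyc, hnext, ← hj]
  by_cases hcase : j + 1 < L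
  · rw [Nat.mod_eq_of_lt hcase]
    exact c.adj_getVert_succ (by omega)
  · have hjL : j + 1 = L := by omega
    have h0 : c.getVert L = c.getVert 0 := by rw [Walk.getVert_length, Walk.getVert_zero]
    rw [hjL, Nat.mod_self, h0]
    exact c.adj_getVert_succ (by omega)

lemma gf_succ (hcyc : c.IsCycle) (i : ℕ) : cSucc c (gf c v i) = gf c v (i + 1) := by
  rw [cSucc, dif_pos (gf_mem c v hcyc i)]
  have hnd : c.support.tail.Nodup := hcyc.support_nodup
  have hlt := gf_lt c v hcyc i
  have hget : gf c v i = c.support.tail.get ⟨_, hlt⟩ := by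
    rw [gf_getElem c v hcyc]; simp
  have key : ∀ (x : V) (hx : x ∈ c.support.tail),
      x = c.support.tail.get ⟨_, hlt⟩ →
      c.support.tail.next x hx = c.support.tail.get
        ⟨((c.support.tail.idxOf v + i) % c.length + 1) % c.support.tail.length,
          Nat.mod_lt _ (by rw [len_tail]; exact L_pos c hcyc)⟩ := by
    rintro x hx rfl
    exact List.next_getElem _ hnd _ hlt
  rw [key _ _ hget, gf_getElem c v hcyc (i+1), List.get_eq_getElem]
  congr 1
  simp only [len_tail]
  rw [Nat.mod_add_mod, ← Nat.add_assoc]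

lemma gf_period (hcyc : c.IsCycle) (i : ℕ) : gf c v (i + c.length) = gf c v i := by
  rw [gf, gf, ← Nat.add_assoc, Nat.add_mod_right]

lemma gf_congr {i j : ℕ} (h : i % c.length = j % c.length) : gf c v i = gf c v j := by
  rw [gf, gf, Nat.add_mod, h, ← Nat.add_mod]

lemma gf_inj (hcyc : c.IsCycle) {i j : ℕ} (h : gf c v i = gf c v j) :
    i % c.length = j % c.length := by
  rw [gf_getElem c v hcyc, gf_getElem c v hcyc] at h
  have hnd : c.support.tail.Nodup := hcyc.support_nodup
  have heq := (List.Nodup.getElem_inj_iff hnd).1 h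
  exact Nat.ModEq.add_left_cancel' _ heq

lemma gf_surj (hcyc : c.IsCycle) (hv : v ∈ c.support.tail) {y : V}
    (hy : y ∈ c.support.tail) : ∃ i, i < c.length ∧ gf c v i = y := by
  have hiv : c.support.tail.idxOf v ≤ c.length := by
    rw [← len_tail]; exact le_of_lt (List.idxOf_lt_length_iff.2 hv)
  have hj : c.support.tail.idxOf y < c.length := by
    rw [← len_tail]; exact List.idxOf_lt_length_iff.2 hy
  refine ⟨(c.support.tail.idxOf y + c.length - c.support.tail.idxOf v) % c.length,
    Nat.mod_lt _ (L_pos c hcyc), ?_⟩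
  rw [gf, Nat.add_mod_mod]
  have heq : c.support.tail.idxOf v + (c.support.tail.idxOf y + c.length -
      c.support.tail.idxOf v) = c.support.tail.idxOf y + c.length := by omega
  rw [heq, Nat.add_mod_right, Nat.mod_eq_of_lt hj,
    List.getD_eq_getElem _ _ (by rw [len_tail]; exact hj), List.getElem_idxOf]

lemma cSucc_not_mem {x : V} (hx : x ∉ c.support.tail) : cSucc c x = x := by
  rw [cSucc, dif_neg hx]

lemma cPred_cSucc (hcyc : c.IsCycle) {x : V} (hx : x ∈ c.support.tail) :
    cPred c (cSucc c x) = x := by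
  rw [cSucc, dif_pos hx, cPred, dif_pos (List.next_mem _ _ _)]
  exact List.prev_next _ hcyc.support_nodup x hx

lemma gf_pred (hcyc : c.IsCycle) (i : ℕ) : cPred c (gf c v (i + 1)) = gf c v i := by
  rw [← gf_succ c v hcyc i, cPred_cSucc c hcyc (gf_mem c v hcyc i)]

lemma gf_iterate (hcyc : c.IsCycle) (k i : ℕ) :
    (cSucc c)^[k] (gf c v i) = gf c v (i + k) := by
  induction k with
  | zero => simp
  | succ n ih =>
    rw [Function.iterate_succ_apply', ih, gf_succ c v hcyc, Nat.add_assoc]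

lemma iterate_not_mem {x : V} (hx : x ∉ c.support.tail) (k : ℕ) :
    (cSucc c)^[k] x = x :=
  Function.iterate_fixed (cSucc_not_mem c hx) k

end coord


end WithDec

/-- ascending run of `k` vertices starting at `g s` -/
def asc (g : ℕ → V) : ℕ → ℕ → List V
  | _, 0 => []
  | s, (k+1) => g s :: asc g (s+1) k

/-- `[g s, g (s+1), ..., g e]` -/
def ascI (g : ℕ → V) (s e : ℕ) : List V := asc g s (e + 1 - s)

/-- `[g e, ..., g s]` -/
def descI (g : ℕ → V) (s e : ℕ) : List V := (ascI g s e).reverse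

lemma mem_asc {g : ℕ → V} {y : V} : ∀ {k s : ℕ}, y ∈ asc g s k ↔ ∃ t, t < k ∧ y = g (s + t)
  | 0, s => by simp [asc]
  | (k+1), s => by
    simp only [asc, List.mem_cons, mem_asc (k := k) (s := s+1)]
    constructor
    · rintro (rfl | ⟨t, ht, rfl⟩)
      · exact ⟨0, by omega, by simp⟩
      · exact ⟨t + 1, by omega, by rw [show s + (t+1) = s + 1 + t by omega]⟩
    · rintro ⟨t, ht, rfl⟩
      cases t with
      | zero => exact Or.inl (by simp)
      | succ n => exact Or.inr ⟨n, by omega, by rw [show s + 1 + n = s + (n+1) by omega]⟩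

lemma length_asc {g : ℕ → V} : ∀ (k s : ℕ), (asc g s k).length = k
  | 0, s => rfl
  | (k+1), s => by simp [asc, length_asc k (s+1)]

lemma mem_ascI {g : ℕ → V} {y : V} {s e : ℕ} (hse : s ≤ e) :
    y ∈ ascI g s e ↔ ∃ t, s ≤ t ∧ t ≤ e ∧ y = g t := by
  rw [ascI, mem_asc]
  constructor
  · rintro ⟨t, ht, rfl⟩; exact ⟨s + t, by omega, by omega, rfl⟩
  · rintro ⟨t, h1, h2, rfl⟩; exact ⟨t - s, by omega, by rw [show s + (t - s) = t by omega]⟩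

lemma mem_descI {g : ℕ → V} {y : V} {s e : ℕ} (hse : s ≤ e) :
    y ∈ descI g s e ↔ ∃ t, s ≤ t ∧ t ≤ e ∧ y = g t := by
  rw [descI, List.mem_reverse]; exact mem_ascI hse

lemma length_ascI {g : ℕ → V} (s e : ℕ) : (ascI g s e).length = e + 1 - s := length_asc _ _

lemma length_descI {g : ℕ → V} (s e : ℕ) : (descI g s e).length = e + 1 - s := by
  rw [descI, List.length_reverse]; exact length_ascI s e

lemma nodup_ascI {g : ℕ → V} {L : ℕ} (hinj : ∀ i j, i < L → j < L → g i = g j → i = j)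
    {s e : ℕ} (hse : s ≤ e) (he : e < L) : (ascI g s e).Nodup := by
  rw [ascI]
  have : ∀ (k s' : ℕ), s' + k ≤ L → (asc g s' k).Nodup := by
    intro k
    induction k with
    | zero => intro s' _; simp [asc]
    | succ n ih =>
      intro s' h
      rw [asc, List.nodup_cons]
      refine ⟨?_, ih (s'+1) (by omega)⟩
      rw [mem_asc]
      rintro ⟨t, ht, hgt⟩
      have := hinj _ _ (by omega) (by omega) hgt
      omega
  exact this _ _ (by omega)

lemma nodup_descI {g : ℕ → V} {L : ℕ} (hinj : ∀ i j, i < L → j < L → g i = g j → i = j)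
    {s e : ℕ} (hse : s ≤ e) (he : e < L) : (descI g s e).Nodup := by
  rw [descI, List.nodup_reverse]; exact nodup_ascI hinj hse he

lemma chain_asc {g : ℕ → V} (hadjg : ∀ i, G.Adj (g i) (g (i + 1))) :
    ∀ (k s : ℕ) (x : V) (l' : List V), 0 < k → G.Adj x (g s) →
      List.Chain G.Adj (g (s + k - 1)) l' → List.Chain G.Adj x (asc g s k ++ l')
  | 0, s, x, l', hk, _, _ => absurd hk (by omega)
  | 1, s, x, l', _, hx, hl => by
    rw [asc, asc, List.singleton_append]
    exact List.chain_cons.2 ⟨hx, hl⟩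
  | (k+2), s, x, l', _, hx, hl => by
    rw [asc, List.cons_append]
    refine List.chain_cons.2 ⟨hx, ?_⟩
    refine chain_asc hadjg (k+1) (s+1) (g s) l' (by omega) (hadjg s) ?_
    rw [show s + 1 + (k+1) - 1 = s + (k+2) - 1 by omega]
    exact hl

lemma chain_ascI {g : ℕ → V} (hadjg : ∀ i, G.Adj (g i) (g (i + 1)))
    {s e : ℕ} {x : V} {l' : List V} (hse : s ≤ e) (hx : G.Adj x (g s))
    (hl : List.Chain G.Adj (g e) l') : List.Chain G.Adj x (ascI g s e ++ l') := by
  rw [ascI]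
  exact chain_asc hadjg _ s x l' (by omega) hx (by rw [show s + (e + 1 - s) - 1 = e by omega]; exact hl)

lemma desc_eq {g : ℕ → V} : ∀ (k s : ℕ), (asc g s (k+1)).reverse = (asc g (s+1) k).reverse ++ [g s]
  | k, s => by rw [asc, List.reverse_cons]

lemma chain_desc {g : ℕ → V} (hadjg : ∀ i, G.Adj (g i) (g (i + 1))) :
    ∀ (k s : ℕ) (x : V) (l' : List V), G.Adj x (g (s + k)) →
      List.Chain G.Adj (g s) l' → List.Chain G.Adj x ((asc g s (k+1)).reverse ++ l')
  | 0, s, x, l', hx, hl => by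
    rw [asc, asc, List.reverse_singleton, List.singleton_append]
    exact List.chain_cons.2 ⟨by simpa using hx, hl⟩
  | (k+1), s, x, l', hx, hl => by
    rw [desc_eq, List.append_assoc, List.singleton_append]
    refine chain_desc hadjg k (s+1) x (g s :: l') ?_ ?_
    · rw [show s + 1 + k = s + (k+1) by omega]; exact hx
    · exact List.chain_cons.2 ⟨(hadjg s).symm, hl⟩

lemma chain_descI {g : ℕ → V} (hadjg : ∀ i, G.Adj (g i) (g (i + 1)))
    {s e : ℕ} {x : V} {l' : List V} (hse : s ≤ e) (hx : G.Adj x (g e))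
    (hl : List.Chain G.Adj (g s) l') : List.Chain G.Adj x (descI g s e ++ l') := by
  rw [descI, ascI, show e + 1 - s = (e - s) + 1 by omega]
  exact chain_desc hadjg (e - s) s x l' (by rw [show s + (e - s) = e by omega]; exact hx) hl

lemma chain_singleton_end {x u : V} (h : G.Adj x u) :
    List.Chain G.Adj x [u] := List.chain_cons.2 ⟨h, List.Chain.nil⟩


lemma notmem_of_mem_char {g : ℕ → V} {u : V} {X : List V} {s e : ℕ}
    (hX : ∀ y ∈ X, ∃ t, s ≤ t ∧ t ≤ e ∧ y = g t) (hu : ∀ i, u ≠ g i) : u ∉ X := by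
  intro hm
  obtain ⟨t, -, -, ht⟩ := hX u hm
  exact hu t ht

lemma disj_of_mem_char {g : ℕ → V} {L : ℕ}
    (hinj : ∀ i j, i < L → j < L → g i = g j → i = j) {X Y : List V}
    {s e s' e' : ℕ} (hX : ∀ y ∈ X, ∃ t, s ≤ t ∧ t ≤ e ∧ y = g t)
    (hY : ∀ y ∈ Y, ∃ t, s' ≤ t ∧ t ≤ e' ∧ y = g t)
    (he : e < L) (he' : e' < L) (hd : e < s' ∨ e' < s) : X.Disjoint Y := by
  intro y hy hy'
  obtain ⟨t, h1, h2, rfl⟩ := hX y hy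
  obtain ⟨t', h3, h4, ht⟩ := hY _ hy'
  have := hinj t' t (by omega) (by omega) ht.symm
  omega

lemma nodup_app5 {g : ℕ → V} {L : ℕ}
    (hinj : ∀ i j, i < L → j < L → g i = g j → i = j)
    {X1 X2 X3 X4 X5 : List V} {s1 e1 s2 e2 s3 e3 s4 e4 s5 e5 : ℕ}
    (h1 : ∀ y ∈ X1, ∃ t, s1 ≤ t ∧ t ≤ e1 ∧ y = g t)
    (h2 : ∀ y ∈ X2, ∃ t, s2 ≤ t ∧ t ≤ e2 ∧ y = g t)
    (h3 : ∀ y ∈ X3, ∃ t, s3 ≤ t ∧ t ≤ e3 ∧ y = g t)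
    (h4 : ∀ y ∈ X4, ∃ t, s4 ≤ t ∧ t ≤ e4 ∧ y = g t)
    (h5 : ∀ y ∈ X5, ∃ t, s5 ≤ t ∧ t ≤ e5 ∧ y = g t)
    (n1 : X1.Nodup) (n2 : X2.Nodup) (n3 : X3.Nodup) (n4 : X4.Nodup) (n5 : X5.Nodup)
    (hb : e1 < L ∧ e2 < L ∧ e3 < L ∧ e4 < L ∧ e5 < L)
    (hd : (e1 < s2 ∨ e2 < s1) ∧ (e1 < s3 ∨ e3 < s1) ∧ (e1 < s4 ∨ e4 < s1) ∧
          (e1 < s5 ∨ e5 < s1) ∧ (e2 < s3 ∨ e3 < s2) ∧ (e2 < s4 ∨ e4 < s2) ∧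
          (e2 < s5 ∨ e5 < s2) ∧ (e3 < s4 ∨ e4 < s3) ∧ (e3 < s5 ∨ e5 < s3) ∧
          (e4 < s5 ∨ e5 < s4)) :
    (X1 ++ (X2 ++ (X3 ++ (X4 ++ X5)))).Nodup := by
  obtain ⟨b1, b2, b3, b4, b5⟩ := hb
  obtain ⟨d12, d13, d14, d15, d23, d24, d25, d34, d35, d45⟩ := hd
  rw [List.nodup_append']
  refine ⟨n1, ?_, ?_⟩
  · rw [List.nodup_append']
    refine ⟨n2, ?_, ?_⟩
    · rw [List.nodup_append']
      refine ⟨n3, ?_, ?_⟩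
      · rw [List.nodup_append']
        exact ⟨n4, n5, disj_of_mem_char hinj h4 h5 b4 b5 d45⟩
      · rw [List.disjoint_append_right]
        exact ⟨disj_of_mem_char hinj h3 h4 b3 b4 d34,
               disj_of_mem_char hinj h3 h5 b3 b5 d35⟩
    · rw [List.disjoint_append_right, List.disjoint_append_right]
      exact ⟨disj_of_mem_char hinj h2 h3 b2 b3 d23,
             disj_of_mem_char hinj h2 h4 b2 b4 d24,
             disj_of_mem_char hinj h2 h5 b2 b5 d25⟩
  · rw [List.disjoint_append_right, List.disjoint_append_right,
        List.disjoint_append_right]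
    exact ⟨disj_of_mem_char hinj h1 h2 b1 b2 d12,
           disj_of_mem_char hinj h1 h3 b1 b3 d13,
           disj_of_mem_char hinj h1 h4 b1 b4 d14,
           disj_of_mem_char hinj h1 h5 b1 b5 d15⟩

lemma nodup_app3 {g : ℕ → V} {L : ℕ}
    (hinj : ∀ i j, i < L → j < L → g i = g j → i = j)
    {X1 X2 X3 : List V} {s1 e1 s2 e2 s3 e3 : ℕ}
    (h1 : ∀ y ∈ X1, ∃ t, s1 ≤ t ∧ t ≤ e1 ∧ y = g t)
    (h2 : ∀ y ∈ X2, ∃ t, s2 ≤ t ∧ t ≤ e2 ∧ y = g t)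
    (h3 : ∀ y ∈ X3, ∃ t, s3 ≤ t ∧ t ≤ e3 ∧ y = g t)
    (n1 : X1.Nodup) (n2 : X2.Nodup) (n3 : X3.Nodup)
    (hb : e1 < L ∧ e2 < L ∧ e3 < L)
    (hd : (e1 < s2 ∨ e2 < s1) ∧ (e1 < s3 ∨ e3 < s1) ∧ (e2 < s3 ∨ e3 < s2)) :
    (X1 ++ (X2 ++ X3)).Nodup := by
  obtain ⟨b1, b2, b3⟩ := hb
  obtain ⟨d12, d13, d23⟩ := hd
  rw [List.nodup_append']
  refine ⟨n1, ?_, ?_⟩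
  · rw [List.nodup_append']
    exact ⟨n2, n3, disj_of_mem_char hinj h2 h3 b2 b3 d23⟩
  · rw [List.disjoint_append_right]
    exact ⟨disj_of_mem_char hinj h1 h2 b1 b2 d12,
           disj_of_mem_char hinj h1 h3 b1 b3 d13⟩



section Cases

variable [DecidableEq V]

lemma ce1_false {G : SimpleGraph V} {a : V} {c : G.Walk a a} (hc : IsLongestCycle G c)
    {g : ℕ → V} {L : ℕ} {u : V} {p q r : ℕ}
    (hadjg : ∀ i, G.Adj (g i) (g (i + 1)))
    (hinj : ∀ i j, i < L → j < L → g i = g j → i = j)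
    (hu : ∀ i, u ≠ g i) (hL : L = c.length)
    (hp : 1 ≤ p) (hq : p + 2 ≤ q) (hr : q + 2 ≤ r) (hrL : r + 1 ≤ L)
    (hchord : G.Adj (g (p + 1)) (g (r - 1)))
    (hxv : G.Adj (g 0) (g q)) (hxu : G.Adj u (g q))
    (h1 : G.Adj u (g 1)) (h2 : G.Adj u (g (L - 1)))
    (hwrap : G.Adj (g (L - 1)) (g 0))
    (hbi : G.Adj u (g p) ∨ G.Adj (g 0) (g p))
    (hbj : G.Adj u (g r) ∨ G.Adj (g 0) (g r))
    (hCE : G.Adj (g (q + 1)) (g 1)) : False := by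
  rcases hbi with hbiu | hbiv <;> rcases hbj with hbju | hbjv
  · -- uu
    refine no_longer_s16 hc u (descI g 1 p ++ (ascI g (q + 1) (r - 1) ++ (ascI g (p + 1) q ++ (ascI g 0 0 ++ (descI g r (L - 1)))))) ?_ ?_ ?_ ?_
    · simp only [List.append_assoc]
      exact chain_descI hadjg (by omega) (hbiu) (chain_ascI hadjg (by omega) (hCE.symm) (chain_ascI hadjg (by omega) (hchord.symm) (chain_ascI hadjg (by omega) (hxv.symm) (chain_descI hadjg (by omega) (hwrap.symm) (chain_singleton_end (hbju.symm))))))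
    · refine List.nodup_cons.2 ⟨?_, ?_⟩
      · simp only [List.mem_append, not_or]
        exact ⟨notmem_of_mem_char (fun y hy => (mem_descI (by omega)).1 hy) hu, notmem_of_mem_char (fun y hy => (mem_ascI (by omega)).1 hy) hu, notmem_of_mem_char (fun y hy => (mem_ascI (by omega)).1 hy) hu, notmem_of_mem_char (fun y hy => (mem_ascI (by omega)).1 hy) hu, notmem_of_mem_char (fun y hy => (mem_descI (by omega)).1 hy) hu⟩
      · exact nodup_app5 hinj (fun y hy => (mem_descI (by omega)).1 hy) (fun y hy => (mem_ascI (by omega)).1 hy) (fun y hy => (mem_ascI (by omega)).1 hy) (fun y hy => (mem_ascI (by omega)).1 hy) (fun y hy => (mem_descI (by omega)).1 hy) (nodup_descI hinj (by omega) (by omega)) (nodup_ascI hinj (by omega) (by omega)) (nodup_ascI hinj (by omega) (by omega)) (nodup_ascI hinj (by omega) (by omega)) (nodup_descI hinj (by omega) (by omega))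
          (by refine ⟨?_,?_,?_,?_,?_⟩ <;> omega)
          (by refine ⟨?_,?_,?_,?_,?_,?_,?_,?_,?_,?_⟩ <;> omega)
    · simp only [List.length_append, length_ascI, length_descI]; omega
    · simp only [List.length_append, length_ascI, length_descI]; omega
  · -- uv
    refine no_longer_s16 hc u (descI g 1 p ++ (ascI g (q + 1) (r - 1) ++ (ascI g (p + 1) q ++ (ascI g 0 0 ++ (ascI g r (L - 1)))))) ?_ ?_ ?_ ?_
    · simp only [List.append_assoc]
      exact chain_descI hadjg (by omega) (hbiu) (chain_ascI hadjg (by omega) (hCE.symm) (chain_ascI hadjg (by omega) (hchord.symm) (chain_ascI hadjg (by omega) (hxv.symm) (chain_ascI hadjg (by omega) (hbjv) (chain_singleton_end (h2.symm))))))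
    · refine List.nodup_cons.2 ⟨?_, ?_⟩
      · simp only [List.mem_append, not_or]
        exact ⟨notmem_of_mem_char (fun y hy => (mem_descI (by omega)).1 hy) hu, notmem_of_mem_char (fun y hy => (mem_ascI (by omega)).1 hy) hu, notmem_of_mem_char (fun y hy => (mem_ascI (by omega)).1 hy) hu, notmem_of_mem_char (fun y hy => (mem_ascI (by omega)).1 hy) hu, notmem_of_mem_char (fun y hy => (mem_ascI (by omega)).1 hy) hu⟩
      · exact nodup_app5 hinj (fun y hy => (mem_descI (by omega)).1 hy) (fun y hy => (mem_ascI (by omega)).1 hy) (fun y hy => (mem_ascI (by omega)).1 hy) (fun y hy => (mem_ascI (by omega)).1 hy) (fun y hy => (mem_ascI (by omega)).1 hy) (nodup_descI hinj (by omega) (by omega)) (nodup_ascI hinj (by omega) (by omega)) (nodup_ascI hinj (by omega) (by omega)) (nodup_ascI hinj (by omega) (by omega)) (nodup_ascI hinj (by omega) (by omega))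
          (by refine ⟨?_,?_,?_,?_,?_⟩ <;> omega)
          (by refine ⟨?_,?_,?_,?_,?_,?_,?_,?_,?_,?_⟩ <;> omega)
    · simp only [List.length_append, length_ascI, length_descI]; omega
    · simp only [List.length_append, length_ascI, length_descI]; omega
  · -- vu
    refine no_longer_s16 hc u (descI g (p + 1) q ++ (descI g (q + 1) (r - 1) ++ (ascI g 1 p ++ (ascI g 0 0 ++ (descI g r (L - 1)))))) ?_ ?_ ?_ ?_
    · simp only [List.append_assoc]
      exact chain_descI hadjg (by omega) (hxu) (chain_descI hadjg (by omega) (hchord) (chain_ascI hadjg (by omega) (hCE) (chain_ascI hadjg (by omega) (hbiv.symm) (chain_descI hadjg (by omega) (hwrap.symm) (chain_singleton_end (hbju.symm))))))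
    · refine List.nodup_cons.2 ⟨?_, ?_⟩
      · simp only [List.mem_append, not_or]
        exact ⟨notmem_of_mem_char (fun y hy => (mem_descI (by omega)).1 hy) hu, notmem_of_mem_char (fun y hy => (mem_descI (by omega)).1 hy) hu, notmem_of_mem_char (fun y hy => (mem_ascI (by omega)).1 hy) hu, notmem_of_mem_char (fun y hy => (mem_ascI (by omega)).1 hy) hu, notmem_of_mem_char (fun y hy => (mem_descI (by omega)).1 hy) hu⟩
      · exact nodup_app5 hinj (fun y hy => (mem_descI (by omega)).1 hy) (fun y hy => (mem_descI (by omega)).1 hy) (fun y hy => (mem_ascI (by omega)).1 hy) (fun y hy => (mem_ascI (by omega)).1 hy) (fun y hy => (mem_descI (by omega)).1 hy) (nodup_descI hinj (by omega) (by omega)) (nodup_descI hinj (by omega) (by omega)) (nodup_ascI hinj (by omega) (by omega)) (nodup_ascI hinj (by omega) (by omega)) (nodup_descI hinj (by omega) (by omega))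
          (by refine ⟨?_,?_,?_,?_,?_⟩ <;> omega)
          (by refine ⟨?_,?_,?_,?_,?_,?_,?_,?_,?_,?_⟩ <;> omega)
    · simp only [List.length_append, length_ascI, length_descI]; omega
    · simp only [List.length_append, length_ascI, length_descI]; omega
  · -- vv
    refine no_longer_s16 hc u (descI g r (L - 1) ++ (ascI g 0 0 ++ (descI g 1 p ++ (ascI g (q + 1) (r - 1) ++ (ascI g (p + 1) q))))) ?_ ?_ ?_ ?_
    · simp only [List.append_assoc]
      exact chain_descI hadjg (by omega) (h2) (chain_ascI hadjg (by omega) (hbjv.symm) (chain_descI hadjg (by omega) (hbiv) (chain_ascI hadjg (by omega) (hCE.symm) (chain_ascI hadjg (by omega) (hchord.symm) (chain_singleton_end (hxu.symm))))))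
    · refine List.nodup_cons.2 ⟨?_, ?_⟩
      · simp only [List.mem_append, not_or]
        exact ⟨notmem_of_mem_char (fun y hy => (mem_descI (by omega)).1 hy) hu, notmem_of_mem_char (fun y hy => (mem_ascI (by omega)).1 hy) hu, notmem_of_mem_char (fun y hy => (mem_descI (by omega)).1 hy) hu, notmem_of_mem_char (fun y hy => (mem_ascI (by omega)).1 hy) hu, notmem_of_mem_char (fun y hy => (mem_ascI (by omega)).1 hy) hu⟩
      · exact nodup_app5 hinj (fun y hy => (mem_descI (by omega)).1 hy) (fun y hy => (mem_ascI (by omega)).1 hy) (fun y hy => (mem_descI (by omega)).1 hy) (fun y hy => (mem_ascI (by omega)).1 hy) (fun y hy => (mem_ascI (by omega)).1 hy) (nodup_descI hinj (by omega) (by omega)) (nodup_ascI hinj (by omega) (by omega)) (nodup_descI hinj (by omega) (by omega)) (nodup_ascI hinj (by omega) (by omega)) (nodup_ascI hinj (by omega) (by omega))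
          (by refine ⟨?_,?_,?_,?_,?_⟩ <;> omega)
          (by refine ⟨?_,?_,?_,?_,?_,?_,?_,?_,?_,?_⟩ <;> omega)
    · simp only [List.length_append, length_ascI, length_descI]; omega
    · simp only [List.length_append, length_ascI, length_descI]; omega

lemma ce2_false {G : SimpleGraph V} {a : V} {c : G.Walk a a} (hc : IsLongestCycle G c)
    {g : ℕ → V} {L : ℕ} {u : V} {p q r : ℕ}
    (hadjg : ∀ i, G.Adj (g i) (g (i + 1)))
    (hinj : ∀ i j, i < L → j < L → g i = g j → i = j)
    (hu : ∀ i, u ≠ g i) (hL : L = c.length)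
    (hp : 1 ≤ p) (hq : p + 2 ≤ q) (hr : q + 2 ≤ r) (hrL : r + 1 ≤ L)
    (hchord : G.Adj (g (p + 1)) (g (r - 1)))
    (hxv : G.Adj (g 0) (g q)) (hxu : G.Adj u (g q))
    (h1 : G.Adj u (g 1)) (h2 : G.Adj u (g (L - 1)))
    (hwrap : G.Adj (g (L - 1)) (g 0))
    (hbi : G.Adj u (g p) ∨ G.Adj (g 0) (g p))
    (hbj : G.Adj u (g r) ∨ G.Adj (g 0) (g r))
    (hCE : G.Adj (g (q + 1)) (g (L - 1))) : False := by
  rcases hbi with hbiu | hbiv <;> rcases hbj with hbju | hbjv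
  · -- uu
    refine no_longer_s16 hc u (ascI g r (L - 1) ++ (ascI g (q + 1) (r - 1) ++ (ascI g (p + 1) q ++ (ascI g 0 0 ++ (ascI g 1 p))))) ?_ ?_ ?_ ?_
    · simp only [List.append_assoc]
      exact chain_ascI hadjg (by omega) (hbju) (chain_ascI hadjg (by omega) (hCE.symm) (chain_ascI hadjg (by omega) (hchord.symm) (chain_ascI hadjg (by omega) (hxv.symm) (chain_ascI hadjg (by omega) (hadjg 0) (chain_singleton_end (hbiu.symm))))))
    · refine List.nodup_cons.2 ⟨?_, ?_⟩
      · simp only [List.mem_append, not_or]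
        exact ⟨notmem_of_mem_char (fun y hy => (mem_ascI (by omega)).1 hy) hu, notmem_of_mem_char (fun y hy => (mem_ascI (by omega)).1 hy) hu, notmem_of_mem_char (fun y hy => (mem_ascI (by omega)).1 hy) hu, notmem_of_mem_char (fun y hy => (mem_ascI (by omega)).1 hy) hu, notmem_of_mem_char (fun y hy => (mem_ascI (by omega)).1 hy) hu⟩
      · exact nodup_app5 hinj (fun y hy => (mem_ascI (by omega)).1 hy) (fun y hy => (mem_ascI (by omega)).1 hy) (fun y hy => (mem_ascI (by omega)).1 hy) (fun y hy => (mem_ascI (by omega)).1 hy) (fun y hy => (mem_ascI (by omega)).1 hy) (nodup_ascI hinj (by omega) (by omega)) (nodup_ascI hinj (by omega) (by omega)) (nodup_ascI hinj (by omega) (by omega)) (nodup_ascI hinj (by omega) (by omega)) (nodup_ascI hinj (by omega) (by omega))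
          (by refine ⟨?_,?_,?_,?_,?_⟩ <;> omega)
          (by refine ⟨?_,?_,?_,?_,?_,?_,?_,?_,?_,?_⟩ <;> omega)
    · simp only [List.length_append, length_ascI, length_descI]; omega
    · simp only [List.length_append, length_ascI, length_descI]; omega
  · -- uv
    refine no_longer_s16 hc u (descI g (p + 1) q ++ (descI g (q + 1) (r - 1) ++ (descI g r (L - 1) ++ (ascI g 0 0 ++ (ascI g 1 p))))) ?_ ?_ ?_ ?_
    · simp only [List.append_assoc]
      exact chain_descI hadjg (by omega) (hxu) (chain_descI hadjg (by omega) (hchord) (chain_descI hadjg (by omega) (hCE) (chain_ascI hadjg (by omega) (hbjv.symm) (chain_ascI hadjg (by omega) (hadjg 0) (chain_singleton_end (hbiu.symm))))))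
    · refine List.nodup_cons.2 ⟨?_, ?_⟩
      · simp only [List.mem_append, not_or]
        exact ⟨notmem_of_mem_char (fun y hy => (mem_descI (by omega)).1 hy) hu, notmem_of_mem_char (fun y hy => (mem_descI (by omega)).1 hy) hu, notmem_of_mem_char (fun y hy => (mem_descI (by omega)).1 hy) hu, notmem_of_mem_char (fun y hy => (mem_ascI (by omega)).1 hy) hu, notmem_of_mem_char (fun y hy => (mem_ascI (by omega)).1 hy) hu⟩
      · exact nodup_app5 hinj (fun y hy => (mem_descI (by omega)).1 hy) (fun y hy => (mem_descI (by omega)).1 hy) (fun y hy => (mem_descI (by omega)).1 hy) (fun y hy => (mem_ascI (by omega)).1 hy) (fun y hy => (mem_ascI (by omega)).1 hy) (nodup_descI hinj (by omega) (by omega)) (nodup_descI hinj (by omega) (by omega)) (nodup_descI hinj (by omega) (by omega)) (nodup_ascI hinj (by omega) (by omega)) (nodup_ascI hinj (by omega) (by omega))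
          (by refine ⟨?_,?_,?_,?_,?_⟩ <;> omega)
          (by refine ⟨?_,?_,?_,?_,?_,?_,?_,?_,?_,?_⟩ <;> omega)
    · simp only [List.length_append, length_ascI, length_descI]; omega
    · simp only [List.length_append, length_ascI, length_descI]; omega
  · -- vu
    refine no_longer_s16 hc u (ascI g r (L - 1) ++ (ascI g (q + 1) (r - 1) ++ (ascI g (p + 1) q ++ (ascI g 0 0 ++ (descI g 1 p))))) ?_ ?_ ?_ ?_
    · simp only [List.append_assoc]
      exact chain_ascI hadjg (by omega) (hbju) (chain_ascI hadjg (by omega) (hCE.symm) (chain_ascI hadjg (by omega) (hchord.symm) (chain_ascI hadjg (by omega) (hxv.symm) (chain_descI hadjg (by omega) (hbiv) (chain_singleton_end (h1.symm))))))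
    · refine List.nodup_cons.2 ⟨?_, ?_⟩
      · simp only [List.mem_append, not_or]
        exact ⟨notmem_of_mem_char (fun y hy => (mem_ascI (by omega)).1 hy) hu, notmem_of_mem_char (fun y hy => (mem_ascI (by omega)).1 hy) hu, notmem_of_mem_char (fun y hy => (mem_ascI (by omega)).1 hy) hu, notmem_of_mem_char (fun y hy => (mem_ascI (by omega)).1 hy) hu, notmem_of_mem_char (fun y hy => (mem_descI (by omega)).1 hy) hu⟩
      · exact nodup_app5 hinj (fun y hy => (mem_ascI (by omega)).1 hy) (fun y hy => (mem_ascI (by omega)).1 hy) (fun y hy => (mem_ascI (by omega)).1 hy) (fun y hy => (mem_ascI (by omega)).1 hy) (fun y hy => (mem_descI (by omega)).1 hy) (nodup_ascI hinj (by omega) (by omega)) (nodup_ascI hinj (by omega) (by omega)) (nodup_ascI hinj (by omega) (by omega)) (nodup_ascI hinj (by omega) (by omega)) (nodup_descI hinj (by omega) (by omega))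
          (by refine ⟨?_,?_,?_,?_,?_⟩ <;> omega)
          (by refine ⟨?_,?_,?_,?_,?_,?_,?_,?_,?_,?_⟩ <;> omega)
    · simp only [List.length_append, length_ascI, length_descI]; omega
    · simp only [List.length_append, length_ascI, length_descI]; omega
  · -- vv
    refine no_longer_s16 hc u (descI g (p + 1) q ++ (descI g (q + 1) (r - 1) ++ (descI g r (L - 1) ++ (ascI g 0 0 ++ (descI g 1 p))))) ?_ ?_ ?_ ?_
    · simp only [List.append_assoc]
      exact chain_descI hadjg (by omega) (hxu) (chain_descI hadjg (by omega) (hchord) (chain_descI hadjg (by omega) (hCE) (chain_ascI hadjg (by omega) (hbjv.symm) (chain_descI hadjg (by omega) (hbiv) (chain_singleton_end (h1.symm))))))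
    · refine List.nodup_cons.2 ⟨?_, ?_⟩
      · simp only [List.mem_append, not_or]
        exact ⟨notmem_of_mem_char (fun y hy => (mem_descI (by omega)).1 hy) hu, notmem_of_mem_char (fun y hy => (mem_descI (by omega)).1 hy) hu, notmem_of_mem_char (fun y hy => (mem_descI (by omega)).1 hy) hu, notmem_of_mem_char (fun y hy => (mem_ascI (by omega)).1 hy) hu, notmem_of_mem_char (fun y hy => (mem_descI (by omega)).1 hy) hu⟩
      · exact nodup_app5 hinj (fun y hy => (mem_descI (by omega)).1 hy) (fun y hy => (mem_descI (by omega)).1 hy) (fun y hy => (mem_descI (by omega)).1 hy) (fun y hy => (mem_ascI (by omega)).1 hy) (fun y hy => (mem_descI (by omega)).1 hy) (nodup_descI hinj (by omega) (by omega)) (nodup_descI hinj (by omega) (by omega)) (nodup_descI hinj (by omega) (by omega)) (nodup_ascI hinj (by omega) (by omega)) (nodup_descI hinj (by omega) (by omega))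
          (by refine ⟨?_,?_,?_,?_,?_⟩ <;> omega)
          (by refine ⟨?_,?_,?_,?_,?_,?_,?_,?_,?_,?_⟩ <;> omega)
    · simp only [List.length_append, length_ascI, length_descI]; omega
    · simp only [List.length_append, length_ascI, length_descI]; omega

lemma ce3_false {G : SimpleGraph V} {a : V} {c : G.Walk a a} (hc : IsLongestCycle G c)
    {g : ℕ → V} {L : ℕ} {u : V} {p q r : ℕ}
    (hadjg : ∀ i, G.Adj (g i) (g (i + 1)))
    (hinj : ∀ i j, i < L → j < L → g i = g j → i = j)
    (hu : ∀ i, u ≠ g i) (hL : L = c.length)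
    (hp : 1 ≤ p) (hq : p + 2 ≤ q) (hr : q + 2 ≤ r) (hrL : r + 1 ≤ L)
    (hchord : G.Adj (g (p + 1)) (g (r - 1)))
    (hxv : G.Adj (g 0) (g q)) (hxu : G.Adj u (g q))
    (h1 : G.Adj u (g 1)) (h2 : G.Adj u (g (L - 1)))
    (hwrap : G.Adj (g (L - 1)) (g 0))
    (hbi : G.Adj u (g p) ∨ G.Adj (g 0) (g p))
    (hbj : G.Adj u (g r) ∨ G.Adj (g 0) (g r))
    (hCE : G.Adj (g (q - 1)) (g 1)) : False := by
  rcases hbi with hbiu | hbiv <;> rcases hbj with hbju | hbjv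
  · -- uu
    refine no_longer_s16 hc u (descI g 1 p ++ (descI g (p + 1) (q - 1) ++ (descI g q (r - 1) ++ (ascI g 0 0 ++ (descI g r (L - 1)))))) ?_ ?_ ?_ ?_
    · simp only [List.append_assoc]
      exact chain_descI hadjg (by omega) (hbiu) (chain_descI hadjg (by omega) (hCE.symm) (chain_descI hadjg (by omega) (hchord) (chain_ascI hadjg (by omega) (hxv.symm) (chain_descI hadjg (by omega) (hwrap.symm) (chain_singleton_end (hbju.symm))))))
    · refine List.nodup_cons.2 ⟨?_, ?_⟩
      · simp only [List.mem_append, not_or]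
        exact ⟨notmem_of_mem_char (fun y hy => (mem_descI (by omega)).1 hy) hu, notmem_of_mem_char (fun y hy => (mem_descI (by omega)).1 hy) hu, notmem_of_mem_char (fun y hy => (mem_descI (by omega)).1 hy) hu, notmem_of_mem_char (fun y hy => (mem_ascI (by omega)).1 hy) hu, notmem_of_mem_char (fun y hy => (mem_descI (by omega)).1 hy) hu⟩
      · exact nodup_app5 hinj (fun y hy => (mem_descI (by omega)).1 hy) (fun y hy => (mem_descI (by omega)).1 hy) (fun y hy => (mem_descI (by omega)).1 hy) (fun y hy => (mem_ascI (by omega)).1 hy) (fun y hy => (mem_descI (by omega)).1 hy) (nodup_descI hinj (by omega) (by omega)) (nodup_descI hinj (by omega) (by omega)) (nodup_descI hinj (by omega) (by omega)) (nodup_ascI hinj (by omega) (by omega)) (nodup_descI hinj (by omega) (by omega))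
          (by refine ⟨?_,?_,?_,?_,?_⟩ <;> omega)
          (by refine ⟨?_,?_,?_,?_,?_,?_,?_,?_,?_,?_⟩ <;> omega)
    · simp only [List.length_append, length_ascI, length_descI]; omega
    · simp only [List.length_append, length_ascI, length_descI]; omega
  · -- uv
    refine no_longer_s16 hc u (descI g 1 p ++ (descI g (p + 1) (q - 1) ++ (descI g q (r - 1) ++ (ascI g 0 0 ++ (ascI g r (L - 1)))))) ?_ ?_ ?_ ?_
    · simp only [List.append_assoc]
      exact chain_descI hadjg (by omega) (hbiu) (chain_descI hadjg (by omega) (hCE.symm) (chain_descI hadjg (by omega) (hchord) (chain_ascI hadjg (by omega) (hxv.symm) (chain_ascI hadjg (by omega) (hbjv) (chain_singleton_end (h2.symm))))))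
    · refine List.nodup_cons.2 ⟨?_, ?_⟩
      · simp only [List.mem_append, not_or]
        exact ⟨notmem_of_mem_char (fun y hy => (mem_descI (by omega)).1 hy) hu, notmem_of_mem_char (fun y hy => (mem_descI (by omega)).1 hy) hu, notmem_of_mem_char (fun y hy => (mem_descI (by omega)).1 hy) hu, notmem_of_mem_char (fun y hy => (mem_ascI (by omega)).1 hy) hu, notmem_of_mem_char (fun y hy => (mem_ascI (by omega)).1 hy) hu⟩
      · exact nodup_app5 hinj (fun y hy => (mem_descI (by omega)).1 hy) (fun y hy => (mem_descI (by omega)).1 hy) (fun y hy => (mem_descI (by omega)).1 hy) (fun y hy => (mem_ascI (by omega)).1 hy) (fun y hy => (mem_ascI (by omega)).1 hy) (nodup_descI hinj (by omega) (by omega)) (nodup_descI hinj (by omega) (by omega)) (nodup_descI hinj (by omega) (by omega)) (nodup_ascI hinj (by omega) (by omega)) (nodup_ascI hinj (by omega) (by omega))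
          (by refine ⟨?_,?_,?_,?_,?_⟩ <;> omega)
          (by refine ⟨?_,?_,?_,?_,?_,?_,?_,?_,?_,?_⟩ <;> omega)
    · simp only [List.length_append, length_ascI, length_descI]; omega
    · simp only [List.length_append, length_ascI, length_descI]; omega
  · -- vu
    refine no_longer_s16 hc u (ascI g r (L - 1) ++ (ascI g 0 0 ++ (descI g 1 p ++ (descI g (p + 1) (q - 1) ++ (descI g q (r - 1)))))) ?_ ?_ ?_ ?_
    · simp only [List.append_assoc]
      exact chain_ascI hadjg (by omega) (hbju) (chain_ascI hadjg (by omega) (hwrap) (chain_descI hadjg (by omega) (hbiv) (chain_descI hadjg (by omega) (hCE.symm) (chain_descI hadjg (by omega) (hchord) (chain_singleton_end (hxu.symm))))))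
    · refine List.nodup_cons.2 ⟨?_, ?_⟩
      · simp only [List.mem_append, not_or]
        exact ⟨notmem_of_mem_char (fun y hy => (mem_ascI (by omega)).1 hy) hu, notmem_of_mem_char (fun y hy => (mem_ascI (by omega)).1 hy) hu, notmem_of_mem_char (fun y hy => (mem_descI (by omega)).1 hy) hu, notmem_of_mem_char (fun y hy => (mem_descI (by omega)).1 hy) hu, notmem_of_mem_char (fun y hy => (mem_descI (by omega)).1 hy) hu⟩
      · exact nodup_app5 hinj (fun y hy => (mem_ascI (by omega)).1 hy) (fun y hy => (mem_ascI (by omega)).1 hy) (fun y hy => (mem_descI (by omega)).1 hy) (fun y hy => (mem_descI (by omega)).1 hy) (fun y hy => (mem_descI (by omega)).1 hy) (nodup_ascI hinj (by omega) (by omega)) (nodup_ascI hinj (by omega) (by omega)) (nodup_descI hinj (by omega) (by omega)) (nodup_descI hinj (by omega) (by omega)) (nodup_descI hinj (by omega) (by omega))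
          (by refine ⟨?_,?_,?_,?_,?_⟩ <;> omega)
          (by refine ⟨?_,?_,?_,?_,?_,?_,?_,?_,?_,?_⟩ <;> omega)
    · simp only [List.length_append, length_ascI, length_descI]; omega
    · simp only [List.length_append, length_ascI, length_descI]; omega
  · -- vv
    refine no_longer_s16 hc u (ascI g q (r - 1) ++ (ascI g (p + 1) (q - 1) ++ (ascI g 1 p ++ (ascI g 0 0 ++ (ascI g r (L - 1)))))) ?_ ?_ ?_ ?_
    · simp only [List.append_assoc]
      exact chain_ascI hadjg (by omega) (hxu) (chain_ascI hadjg (by omega) (hchord.symm) (chain_ascI hadjg (by omega) (hCE) (chain_ascI hadjg (by omega) (hbiv.symm) (chain_ascI hadjg (by omega) (hbjv) (chain_singleton_end (h2.symm))))))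
    · refine List.nodup_cons.2 ⟨?_, ?_⟩
      · simp only [List.mem_append, not_or]
        exact ⟨notmem_of_mem_char (fun y hy => (mem_ascI (by omega)).1 hy) hu, notmem_of_mem_char (fun y hy => (mem_ascI (by omega)).1 hy) hu, notmem_of_mem_char (fun y hy => (mem_ascI (by omega)).1 hy) hu, notmem_of_mem_char (fun y hy => (mem_ascI (by omega)).1 hy) hu, notmem_of_mem_char (fun y hy => (mem_ascI (by omega)).1 hy) hu⟩
      · exact nodup_app5 hinj (fun y hy => (mem_ascI (by omega)).1 hy) (fun y hy => (mem_ascI (by omega)).1 hy) (fun y hy => (mem_ascI (by omega)).1 hy) (fun y hy => (mem_ascI (by omega)).1 hy) (fun y hy => (mem_ascI (by omega)).1 hy) (nodup_ascI hinj (by omega) (by omega)) (nodup_ascI hinj (by omega) (by omega)) (nodup_ascI hinj (by omega) (by omega)) (nodup_ascI hinj (by omega) (by omega)) (nodup_ascI hinj (by omega) (by omega))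
          (by refine ⟨?_,?_,?_,?_,?_⟩ <;> omega)
          (by refine ⟨?_,?_,?_,?_,?_,?_,?_,?_,?_,?_⟩ <;> omega)
    · simp only [List.length_append, length_ascI, length_descI]; omega
    · simp only [List.length_append, length_ascI, length_descI]; omega

lemma ce4_false {G : SimpleGraph V} {a : V} {c : G.Walk a a} (hc : IsLongestCycle G c)
    {g : ℕ → V} {L : ℕ} {u : V} {p q r : ℕ}
    (hadjg : ∀ i, G.Adj (g i) (g (i + 1)))
    (hinj : ∀ i j, i < L → j < L → g i = g j → i = j)
    (hu : ∀ i, u ≠ g i) (hL : L = c.length)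
    (hp : 1 ≤ p) (hq : p + 2 ≤ q) (hr : q + 2 ≤ r) (hrL : r + 1 ≤ L)
    (hchord : G.Adj (g (p + 1)) (g (r - 1)))
    (hxv : G.Adj (g 0) (g q)) (hxu : G.Adj u (g q))
    (h1 : G.Adj u (g 1)) (h2 : G.Adj u (g (L - 1)))
    (hwrap : G.Adj (g (L - 1)) (g 0))
    (hbi : G.Adj u (g p) ∨ G.Adj (g 0) (g p))
    (hbj : G.Adj u (g r) ∨ G.Adj (g 0) (g r))
    (hCE : G.Adj (g (q - 1)) (g (L - 1))) : False := by
  rcases hbi with hbiu | hbiv <;> rcases hbj with hbju | hbjv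
  · -- uu
    refine no_longer_s16 hc u (ascI g r (L - 1) ++ (descI g (p + 1) (q - 1) ++ (descI g q (r - 1) ++ (ascI g 0 0 ++ (ascI g 1 p))))) ?_ ?_ ?_ ?_
    · simp only [List.append_assoc]
      exact chain_ascI hadjg (by omega) (hbju) (chain_descI hadjg (by omega) (hCE.symm) (chain_descI hadjg (by omega) (hchord) (chain_ascI hadjg (by omega) (hxv.symm) (chain_ascI hadjg (by omega) (hadjg 0) (chain_singleton_end (hbiu.symm))))))
    · refine List.nodup_cons.2 ⟨?_, ?_⟩
      · simp only [List.mem_append, not_or]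
        exact ⟨notmem_of_mem_char (fun y hy => (mem_ascI (by omega)).1 hy) hu, notmem_of_mem_char (fun y hy => (mem_descI (by omega)).1 hy) hu, notmem_of_mem_char (fun y hy => (mem_descI (by omega)).1 hy) hu, notmem_of_mem_char (fun y hy => (mem_ascI (by omega)).1 hy) hu, notmem_of_mem_char (fun y hy => (mem_ascI (by omega)).1 hy) hu⟩
      · exact nodup_app5 hinj (fun y hy => (mem_ascI (by omega)).1 hy) (fun y hy => (mem_descI (by omega)).1 hy) (fun y hy => (mem_descI (by omega)).1 hy) (fun y hy => (mem_ascI (by omega)).1 hy) (fun y hy => (mem_ascI (by omega)).1 hy) (nodup_ascI hinj (by omega) (by omega)) (nodup_descI hinj (by omega) (by omega)) (nodup_descI hinj (by omega) (by omega)) (nodup_ascI hinj (by omega) (by omega)) (nodup_ascI hinj (by omega) (by omega))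
          (by refine ⟨?_,?_,?_,?_,?_⟩ <;> omega)
          (by refine ⟨?_,?_,?_,?_,?_,?_,?_,?_,?_,?_⟩ <;> omega)
    · simp only [List.length_append, length_ascI, length_descI]; omega
    · simp only [List.length_append, length_ascI, length_descI]; omega
  · -- uv
    refine no_longer_s16 hc u (ascI g q (r - 1) ++ (ascI g (p + 1) (q - 1) ++ (descI g r (L - 1) ++ (ascI g 0 0 ++ (ascI g 1 p))))) ?_ ?_ ?_ ?_
    · simp only [List.append_assoc]
      exact chain_ascI hadjg (by omega) (hxu) (chain_ascI hadjg (by omega) (hchord.symm) (chain_descI hadjg (by omega) (hCE) (chain_ascI hadjg (by omega) (hbjv.symm) (chain_ascI hadjg (by omega) (hadjg 0) (chain_singleton_end (hbiu.symm))))))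
    · refine List.nodup_cons.2 ⟨?_, ?_⟩
      · simp only [List.mem_append, not_or]
        exact ⟨notmem_of_mem_char (fun y hy => (mem_ascI (by omega)).1 hy) hu, notmem_of_mem_char (fun y hy => (mem_ascI (by omega)).1 hy) hu, notmem_of_mem_char (fun y hy => (mem_descI (by omega)).1 hy) hu, notmem_of_mem_char (fun y hy => (mem_ascI (by omega)).1 hy) hu, notmem_of_mem_char (fun y hy => (mem_ascI (by omega)).1 hy) hu⟩
      · exact nodup_app5 hinj (fun y hy => (mem_ascI (by omega)).1 hy) (fun y hy => (mem_ascI (by omega)).1 hy) (fun y hy => (mem_descI (by omega)).1 hy) (fun y hy => (mem_ascI (by omega)).1 hy) (fun y hy => (mem_ascI (by omega)).1 hy) (nodup_ascI hinj (by omega) (by omega)) (nodup_ascI hinj (by omega) (by omega)) (nodup_descI hinj (by omega) (by omega)) (nodup_ascI hinj (by omega) (by omega)) (nodup_ascI hinj (by omega) (by omega))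
          (by refine ⟨?_,?_,?_,?_,?_⟩ <;> omega)
          (by refine ⟨?_,?_,?_,?_,?_,?_,?_,?_,?_,?_⟩ <;> omega)
    · simp only [List.length_append, length_ascI, length_descI]; omega
    · simp only [List.length_append, length_ascI, length_descI]; omega
  · -- vu
    refine no_longer_s16 hc u (ascI g r (L - 1) ++ (descI g (p + 1) (q - 1) ++ (descI g q (r - 1) ++ (ascI g 0 0 ++ (descI g 1 p))))) ?_ ?_ ?_ ?_
    · simp only [List.append_assoc]
      exact chain_ascI hadjg (by omega) (hbju) (chain_descI hadjg (by omega) (hCE.symm) (chain_descI hadjg (by omega) (hchord) (chain_ascI hadjg (by omega) (hxv.symm) (chain_descI hadjg (by omega) (hbiv) (chain_singleton_end (h1.symm))))))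
    · refine List.nodup_cons.2 ⟨?_, ?_⟩
      · simp only [List.mem_append, not_or]
        exact ⟨notmem_of_mem_char (fun y hy => (mem_ascI (by omega)).1 hy) hu, notmem_of_mem_char (fun y hy => (mem_descI (by omega)).1 hy) hu, notmem_of_mem_char (fun y hy => (mem_descI (by omega)).1 hy) hu, notmem_of_mem_char (fun y hy => (mem_ascI (by omega)).1 hy) hu, notmem_of_mem_char (fun y hy => (mem_descI (by omega)).1 hy) hu⟩
      · exact nodup_app5 hinj (fun y hy => (mem_ascI (by omega)).1 hy) (fun y hy => (mem_descI (by omega)).1 hy) (fun y hy => (mem_descI (by omega)).1 hy) (fun y hy => (mem_ascI (by omega)).1 hy) (fun y hy => (mem_descI (by omega)).1 hy) (nodup_ascI hinj (by omega) (by omega)) (nodup_descI hinj (by omega) (by omega)) (nodup_descI hinj (by omega) (by omega)) (nodup_ascI hinj (by omega) (by omega)) (nodup_descI hinj (by omega) (by omega))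
          (by refine ⟨?_,?_,?_,?_,?_⟩ <;> omega)
          (by refine ⟨?_,?_,?_,?_,?_,?_,?_,?_,?_,?_⟩ <;> omega)
    · simp only [List.length_append, length_ascI, length_descI]; omega
    · simp only [List.length_append, length_ascI, length_descI]; omega
  · -- vv
    refine no_longer_s16 hc u (ascI g 1 p ++ (ascI g 0 0 ++ (ascI g r (L - 1) ++ (descI g (p + 1) (q - 1) ++ (descI g q (r - 1)))))) ?_ ?_ ?_ ?_
    · simp only [List.append_assoc]
      exact chain_ascI hadjg (by omega) (h1) (chain_ascI hadjg (by omega) (hbiv.symm) (chain_ascI hadjg (by omega) (hbjv) (chain_descI hadjg (by omega) (hCE.symm) (chain_descI hadjg (by omega) (hchord) (chain_singleton_end (hxu.symm))))))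
    · refine List.nodup_cons.2 ⟨?_, ?_⟩
      · simp only [List.mem_append, not_or]
        exact ⟨notmem_of_mem_char (fun y hy => (mem_ascI (by omega)).1 hy) hu, notmem_of_mem_char (fun y hy => (mem_ascI (by omega)).1 hy) hu, notmem_of_mem_char (fun y hy => (mem_ascI (by omega)).1 hy) hu, notmem_of_mem_char (fun y hy => (mem_descI (by omega)).1 hy) hu, notmem_of_mem_char (fun y hy => (mem_descI (by omega)).1 hy) hu⟩
      · exact nodup_app5 hinj (fun y hy => (mem_ascI (by omega)).1 hy) (fun y hy => (mem_ascI (by omega)).1 hy) (fun y hy => (mem_ascI (by omega)).1 hy) (fun y hy => (mem_descI (by omega)).1 hy) (fun y hy => (mem_descI (by omega)).1 hy) (nodup_ascI hinj (by omega) (by omega)) (nodup_ascI hinj (by omega) (by omega)) (nodup_ascI hinj (by omega) (by omega)) (nodup_descI hinj (by omega) (by omega)) (nodup_descI hinj (by omega) (by omega))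
          (by refine ⟨?_,?_,?_,?_,?_⟩ <;> omega)
          (by refine ⟨?_,?_,?_,?_,?_,?_,?_,?_,?_,?_⟩ <;> omega)
    · simp only [List.length_append, length_ascI, length_descI]; omega
    · simp only [List.length_append, length_ascI, length_descI]; omega

lemma deg_false {G : SimpleGraph V} {a : V} {c : G.Walk a a} (hc : IsLongestCycle G c)
    {g : ℕ → V} {L : ℕ} {u : V} {p : ℕ}
    (hadjg : ∀ i, G.Adj (g i) (g (i + 1)))
    (hinj : ∀ i j, i < L → j < L → g i = g j → i = j)
    (hu : ∀ i, u ≠ g i) (hL : L = c.length)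
    (hp : 1 ≤ p) (hpL : p + 2 ≤ L)
    (h1 : G.Adj u (g 1)) (h2 : G.Adj u (g (L - 1)))
    (hwrap : G.Adj (g (L - 1)) (g 0))
    (hbi : G.Adj u (g p) ∨ G.Adj (g 0) (g p))
    (hbj : G.Adj u (g (p + 1)) ∨ G.Adj (g 0) (g (p + 1))) : False := by
  rcases hbi with hbiu | hbiv <;> rcases hbj with hbju | hbjv
  · -- uu
    refine no_longer_s16 hc u (ascI g (p + 1) (L - 1) ++ (ascI g 0 0 ++ (ascI g 1 p))) ?_ ?_ ?_ ?_
    · simp only [List.append_assoc]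
      exact chain_ascI hadjg (by omega) (hbju) (chain_ascI hadjg (by omega) (hwrap) (chain_ascI hadjg (by omega) (hadjg 0) (chain_singleton_end (hbiu.symm))))
    · refine List.nodup_cons.2 ⟨?_, ?_⟩
      · simp only [List.mem_append, not_or]
        exact ⟨notmem_of_mem_char (fun y hy => (mem_ascI (by omega)).1 hy) hu, notmem_of_mem_char (fun y hy => (mem_ascI (by omega)).1 hy) hu, notmem_of_mem_char (fun y hy => (mem_ascI (by omega)).1 hy) hu⟩
      · exact nodup_app3 hinj (fun y hy => (mem_ascI (by omega)).1 hy) (fun y hy => (mem_ascI (by omega)).1 hy) (fun y hy => (mem_ascI (by omega)).1 hy) (nodup_ascI hinj (by omega) (by omega)) (nodup_ascI hinj (by omega) (by omega)) (nodup_ascI hinj (by omega) (by omega))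
          (by refine ⟨?_,?_,?_⟩ <;> omega)
          (by refine ⟨?_,?_,?_⟩ <;> omega)
    · simp only [List.length_append, length_ascI, length_descI]; omega
    · simp only [List.length_append, length_ascI, length_descI]; omega
  · -- uv
    refine no_longer_s16 hc u (descI g 1 p ++ (ascI g 0 0 ++ (ascI g (p + 1) (L - 1)))) ?_ ?_ ?_ ?_
    · simp only [List.append_assoc]
      exact chain_descI hadjg (by omega) (hbiu) (chain_ascI hadjg (by omega) ((hadjg 0).symm) (chain_ascI hadjg (by omega) (hbjv) (chain_singleton_end (h2.symm))))
    · refine List.nodup_cons.2 ⟨?_, ?_⟩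
      · simp only [List.mem_append, not_or]
        exact ⟨notmem_of_mem_char (fun y hy => (mem_descI (by omega)).1 hy) hu, notmem_of_mem_char (fun y hy => (mem_ascI (by omega)).1 hy) hu, notmem_of_mem_char (fun y hy => (mem_ascI (by omega)).1 hy) hu⟩
      · exact nodup_app3 hinj (fun y hy => (mem_descI (by omega)).1 hy) (fun y hy => (mem_ascI (by omega)).1 hy) (fun y hy => (mem_ascI (by omega)).1 hy) (nodup_descI hinj (by omega) (by omega)) (nodup_ascI hinj (by omega) (by omega)) (nodup_ascI hinj (by omega) (by omega))
          (by refine ⟨?_,?_,?_⟩ <;> omega)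
          (by refine ⟨?_,?_,?_⟩ <;> omega)
    · simp only [List.length_append, length_ascI, length_descI]; omega
    · simp only [List.length_append, length_ascI, length_descI]; omega
  · -- vu
    refine no_longer_s16 hc u (ascI g (p + 1) (L - 1) ++ (ascI g 0 0 ++ (descI g 1 p))) ?_ ?_ ?_ ?_
    · simp only [List.append_assoc]
      exact chain_ascI hadjg (by omega) (hbju) (chain_ascI hadjg (by omega) (hwrap) (chain_descI hadjg (by omega) (hbiv) (chain_singleton_end (h1.symm))))
    · refine List.nodup_cons.2 ⟨?_, ?_⟩
      · simp only [List.mem_append, not_or]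
        exact ⟨notmem_of_mem_char (fun y hy => (mem_ascI (by omega)).1 hy) hu, notmem_of_mem_char (fun y hy => (mem_ascI (by omega)).1 hy) hu, notmem_of_mem_char (fun y hy => (mem_descI (by omega)).1 hy) hu⟩
      · exact nodup_app3 hinj (fun y hy => (mem_ascI (by omega)).1 hy) (fun y hy => (mem_ascI (by omega)).1 hy) (fun y hy => (mem_descI (by omega)).1 hy) (nodup_ascI hinj (by omega) (by omega)) (nodup_ascI hinj (by omega) (by omega)) (nodup_descI hinj (by omega) (by omega))
          (by refine ⟨?_,?_,?_⟩ <;> omega)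
          (by refine ⟨?_,?_,?_⟩ <;> omega)
    · simp only [List.length_append, length_ascI, length_descI]; omega
    · simp only [List.length_append, length_ascI, length_descI]; omega
  · -- vv
    refine no_longer_s16 hc u (ascI g 1 p ++ (ascI g 0 0 ++ (ascI g (p + 1) (L - 1)))) ?_ ?_ ?_ ?_
    · simp only [List.append_assoc]
      exact chain_ascI hadjg (by omega) (h1) (chain_ascI hadjg (by omega) (hbiv.symm) (chain_ascI hadjg (by omega) (hbjv) (chain_singleton_end (h2.symm))))
    · refine List.nodup_cons.2 ⟨?_, ?_⟩
      · simp only [List.mem_append, not_or]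
        exact ⟨notmem_of_mem_char (fun y hy => (mem_ascI (by omega)).1 hy) hu, notmem_of_mem_char (fun y hy => (mem_ascI (by omega)).1 hy) hu, notmem_of_mem_char (fun y hy => (mem_ascI (by omega)).1 hy) hu⟩
      · exact nodup_app3 hinj (fun y hy => (mem_ascI (by omega)).1 hy) (fun y hy => (mem_ascI (by omega)).1 hy) (fun y hy => (mem_ascI (by omega)).1 hy) (nodup_ascI hinj (by omega) (by omega)) (nodup_ascI hinj (by omega) (by omega)) (nodup_ascI hinj (by omega) (by omega))
          (by refine ⟨?_,?_,?_⟩ <;> omega)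
          (by refine ⟨?_,?_,?_⟩ <;> omega)
    · simp only [List.length_append, length_ascI, length_descI]; omega
    · simp only [List.length_append, length_ascI, length_descI]; omega


end Cases

end Aux

theorem stmt16 {V : Type*} [Fintype V] [DecidableEq V] (G : SimpleGraph V)
    (hn : 3 ≤ Fintype.card V) (htough : OneTough G) (hsig : Fintype.card V ≤ sigma3 G)
    (hham : ¬ G.IsHamiltonian) {a : V} (c : G.Walk a a) (hc : IsLongestCycle G c)
    (u v : V) (hu : u ∉ c.support) (hv : v ∈ c.support)
    (huv1 : G.Adj u (cSucc c v)) (huv2 : G.Adj u (cPred c v))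
    (B : Set V) (hB : B = G.neighborSet u ∪ G.neighborSet v)
    (bi bj a' c' : V) (hbi : bi ∈ B) (hbj : bj ∈ B) (horder : bj ∈ arc c bi v)
    (ha' : a' = cSucc c bi) (hc' : c' = cPred c bj) (hac : a' ≠ c') (hadj : G.Adj a' c')
    (x : V) (hxu : x ∈ G.neighborSet u) (hxv : x ∈ G.neighborSet v)
    (hx : x ∈ arc c a' c') :
    ¬ G.Adj (cSucc c x) (cSucc c v) ∧ ¬ G.Adj (cSucc c x) (cPred c v) ∧
    ¬ G.Adj (cPred c x) (cSucc c v) ∧ ¬ G.Adj (cPred c x) (cPred c v) := by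
  classical
  have hcyc := hc.1
  have hL3 := hcyc.three_le_length
  set L := c.length with hLdef
  have hvt : v ∈ c.support.tail := mem_tail_of_mem_support c v hcyc hv
  have hadjg : ∀ i, G.Adj (gf c v i) (gf c v (i + 1)) := fun i => gf_adj c v hcyc i
  have hinj : ∀ i j, i < L → j < L → gf c v i = gf c v j → i = j := by
    intro i j hi hj h
    have := gf_inj c v hcyc h
    rwa [Nat.mod_eq_of_lt hi, Nat.mod_eq_of_lt hj] at this
  have hune : ∀ i, u ≠ gf c v i := by
    intro i h; exact hu (h ▸ gf_mem_support c v hcyc i)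
  have hg0 : gf c v 0 = v := gf_zero c v hcyc hvt
  have hgL : gf c v L = gf c v 0 := by
    have := gf_period c v hcyc 0; rwa [Nat.zero_add] at this
  have hs1 : cSucc c v = gf c v 1 := by
    have h1 := gf_succ c v hcyc 0
    rw [hg0] at h1; exact h1
  have hpv : cPred c v = gf c v (L - 1) := by
    have h1 := gf_pred c v hcyc (L - 1)
    rw [show (L - 1) + 1 = L by omega, hgL, hg0] at h1
    exact h1
  have hwrap : G.Adj (gf c v (L - 1)) (gf c v 0) := by
    have := hadjg (L - 1)
    rwa [show L - 1 + 1 = L by omega, hgL] at this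
  have huv1g : G.Adj u (gf c v 1) := by rwa [hs1] at huv1
  have huv2g : G.Adj u (gf c v (L - 1)) := by rwa [hpv] at huv2
  obtain ⟨i₁, k₁, hi₁0, hik, hkL, hsucc, hbj_eq⟩ := horder
  have hbit : bi ∈ c.support.tail := by
    by_contra hbit
    rw [iterate_not_mem c hbit] at hsucc
    exact hbit (hsucc ▸ hvt)
  obtain ⟨p, hpL, hgp⟩ := gf_surj c v hcyc hvt hbit
  have hvk : gf c v (p + k₁) = gf c v 0 := by
    rw [← gf_iterate c v hcyc k₁ p, hgp, hsucc, hg0]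
  have hmod : (p + k₁) % L = 0 := by
    have := gf_inj c v hcyc hvk
    simpa using this
  have hpk : p + k₁ = L := by
    rcases Nat.dvd_of_mod_eq_zero hmod with ⟨m, hm⟩
    match m, hm with
    | 0, hm => omega
    | 1, hm => omega
    | (m+2), hm =>
      have hx2 : L * (m + 2) = L * 2 + L * m := by ring
      omega
  have hp1 : 1 ≤ p := by omega
  have hgr : gf c v (p + i₁) = bj := by
    rw [hbj_eq, ← hgp, gf_iterate c v hcyc]
  have hrL : (p + i₁) + 1 ≤ L := by omega
  have ha'g : a' = gf c v (p + 1) := by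
    rw [ha', ← hgp, gf_succ c v hcyc]
  have hc'g : c' = gf c v ((p + i₁) - 1) := by
    have h1 := gf_pred c v hcyc ((p + i₁) - 1)
    rw [show ((p + i₁) - 1) + 1 = p + i₁ by omega, hgr] at h1
    rw [hc', h1]
  have hbiU : G.Adj u (gf c v p) ∨ G.Adj (gf c v 0) (gf c v p) := by
    rw [hB] at hbi
    rcases hbi with h | h
    · exact Or.inl (by rw [hgp]; exact (G.mem_neighborSet u bi).1 h)
    · exact Or.inr (by rw [hgp, hg0]; exact (G.mem_neighborSet v bi).1 h)
  have hbjU : G.Adj u (gf c v (p + i₁)) ∨ G.Adj (gf c v 0) (gf c v (p + i₁)) := by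
    rw [hB] at hbj
    rcases hbj with h | h
    · exact Or.inl (by rw [hgr]; exact (G.mem_neighborSet u bj).1 h)
    · exact Or.inr (by rw [hgr, hg0]; exact (G.mem_neighborSet v bj).1 h)
  by_cases hdeg : p + i₁ = p + 1
  · rw [hdeg] at hbjU
    exact absurd (deg_false hc hadjg hinj hune hLdef hp1 (by omega) huv1g huv2g
      hwrap hbiU hbjU) (fun h => h)
  · have hrp3 : p + 3 ≤ p + i₁ := by
      have hne2 : p + i₁ ≠ p + 2 := by
        intro h
        apply hac
        rw [ha'g, hc'g, h, show p + 2 - 1 = p + 1 by omega]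
      omega
    obtain ⟨i₂, k₂, hi₂0, hik₂, hk₂L, hsucc₂, hx_eq⟩ := hx
    have hsucc₂' : gf c v (p + 1 + k₂) = gf c v ((p + i₁) - 1) := by
      rw [← gf_iterate c v hcyc k₂ (p + 1), ← ha'g, hsucc₂, hc'g]
    have hmod₂ : (p + 1 + k₂) % L = ((p + i₁) - 1) % L := gf_inj c v hcyc hsucc₂'
    have hk₂ : p + 1 + k₂ = (p + i₁) - 1 := by
      rw [Nat.mod_eq_of_lt (show (p + i₁) - 1 < L by omega)] at hmod₂
      rcases Nat.lt_or_ge (p + 1 + k₂) L with h' | h'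
      · rwa [Nat.mod_eq_of_lt h'] at hmod₂
      · exfalso
        rw [Nat.mod_eq_sub_mod h', Nat.mod_eq_of_lt (by omega)] at hmod₂
        omega
    have hgq : gf c v (p + 1 + i₂) = x := by
      rw [hx_eq, ha'g, gf_iterate c v hcyc]
    have hq2 : p + 2 ≤ p + 1 + i₂ := by omega
    have hr2 : (p + 1 + i₂) + 2 ≤ p + i₁ := by omega
    have hchordg : G.Adj (gf c v (p + 1)) (gf c v ((p + i₁) - 1)) := by
      rw [← ha'g, ← hc'g]; exact hadj
    have hxug : G.Adj u (gf c v (p + 1 + i₂)) := by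
      rw [hgq]; exact (G.mem_neighborSet u x).1 hxu
    have hxvg : G.Adj (gf c v 0) (gf c v (p + 1 + i₂)) := by
      rw [hg0, hgq]; exact (G.mem_neighborSet v x).1 hxv
    have hsx : cSucc c x = gf c v ((p + 1 + i₂) + 1) := by
      have h1 := gf_succ c v hcyc (p + 1 + i₂)
      rw [hgq] at h1; exact h1
    have hpx : cPred c x = gf c v ((p + 1 + i₂) - 1) := by
      have h1 := gf_pred c v hcyc ((p + 1 + i₂) - 1)
      rw [show ((p + 1 + i₂) - 1) + 1 = p + 1 + i₂ by omega, hgq] at h1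
      exact h1
    refine ⟨?_, ?_, ?_, ?_⟩
    · intro hCE
      rw [hsx, hs1] at hCE
      exact ce1_false hc hadjg hinj hune hLdef hp1 hq2 hr2 hrL hchordg hxvg hxug
        huv1g huv2g hwrap hbiU hbjU hCE
    · intro hCE
      rw [hsx, hpv] at hCE
      exact ce2_false hc hadjg hinj hune hLdef hp1 hq2 hr2 hrL hchordg hxvg hxug
        huv1g huv2g hwrap hbiU hbjU hCE
    · intro hCE
      rw [hpx, hs1] at hCE
      exact ce3_false hc hadjg hinj hune hLdef hp1 hq2 hr2 hrL hchordg hxvg hxug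
        huv1g huv2g hwrap hbiU hbjU hCE
    · intro hCE
      rw [hpx, hpv] at hCE
      exact ce4_false hc hadjg hinj hune hLdef hp1 hq2 hr2 hrL hchordg hxvg hxug
        huv1g huv2g hwrap hbiU hbjU hCE

end
end Paper
end

section
/- In the standard setup, suppose a = b_p⁻ and c = b_q⁺ are distinct vertices for some p < q with ac ∈ E(G). Then (1) either both b_p, b_q ∈ N(u)∖N(v), or both b_p, b_q ∈ N(v)∖N(u); and (2) none of b_p v⁻⁻, b_p v⁺⁺, b_q v⁻⁻, b_q v⁺⁺ is an edge of G. -/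
open scoped Classical
set_option linter.unusedVariables false
set_option linter.unusedTactic false
set_option linter.unreachableTactic false
set_option maxHeartbeats 1600000

namespace Paper

noncomputable section

variable {V : Type*}

def listWalk (G : SimpleGraph V) : ∀ (x y : V) (L : List V), List.Chain G.Adj x L →
    (x :: L).getLast (List.cons_ne_nil x L) = y → G.Walk x y
  | _, _, [], _, h => h ▸ SimpleGraph.Walk.nil
  | x, y, z :: L, hch, h =>
    SimpleGraph.Walk.cons (List.chain_cons.mp hch).1
      (listWalk G z y L (List.chain_cons.mp hch).2
        (by rwa [List.getLast_cons (List.cons_ne_nil z L)] at h))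

lemma listWalk_support (G : SimpleGraph V) (x y : V) (L : List V) (hch : List.Chain G.Adj x L)
    (h : (x :: L).getLast (List.cons_ne_nil x L) = y) :
    (listWalk G x y L hch h).support = x :: L := by
  induction L generalizing x with
  | nil => subst h; simp [listWalk]
  | cons z L ih => simp [listWalk, ih]; exact ih _ _ _

lemma listWalk_length (G : SimpleGraph V) (x y : V) (L : List V) (hch : List.Chain G.Adj x L)
    (h : (x :: L).getLast (List.cons_ne_nil x L) = y) :
    (listWalk G x y L hch h).length = L.length := by
  have := listWalk_support G x y L hch h
  have h2 := SimpleGraph.Walk.length_support (listWalk G x y L hch h)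
  rw [this] at h2
  simpa using h2.symm

lemma startEdge_not_mem_edges (G : SimpleGraph V) {x y : V} (W : G.Walk x y)
    (hnd : W.support.Nodup) (hlen : 2 ≤ W.length) : s(x, y) ∉ W.edges := by
  intro hmem
  cases W with
  | nil => simp at hlen
  | cons hadj W' =>
    rename_i z
    rw [SimpleGraph.Walk.edges_cons, List.mem_cons] at hmem
    rw [SimpleGraph.Walk.support_cons, List.nodup_cons] at hnd
    rcases hmem with heq | hmem
    · rw [Sym2.eq_iff] at heq
      rcases heq with ⟨-, hy⟩ | ⟨hx, -⟩
      · -- hy : y = z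
        cases W' with
        | nil => simp at hlen
        | cons h2 W'' =>
          have hnd2 := hnd.2
          rw [SimpleGraph.Walk.support_cons, List.nodup_cons] at hnd2
          exact hnd2.1 (hy ▸ W''.end_mem_support)
      · exact hnd.1 (hx ▸ W'.start_mem_support)
    · exact hnd.1 (SimpleGraph.Walk.fst_mem_support_of_mem_edges W' hmem)

lemma exists_cycle_of_list (G : SimpleGraph V) (x : V) (L : List V)
    (hnd : (x :: L).Nodup) (hch : List.Chain G.Adj x L) (hlen : 3 ≤ L.length)
    (hcl : G.Adj ((x :: L).getLast (List.cons_ne_nil x L)) x) :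
    ∃ w : G.Walk x x, w.IsCycle ∧ w.length = L.length + 1 := by
  set yl := (x :: L).getLast (List.cons_ne_nil x L) with hyl
  let P : G.Walk x yl := listWalk G x yl L hch rfl
  have hPsup : P.support = x :: L := listWalk_support G x yl L hch rfl
  have hPlen : P.length = L.length := listWalk_length G x yl L hch rfl
  have hPnd : P.support.Nodup := hPsup ▸ hnd
  refine ⟨SimpleGraph.Walk.cons hcl.symm P.reverse, ?_, ?_⟩
  · rw [SimpleGraph.Walk.cons_isCycle_iff]
    constructor
    · rw [SimpleGraph.Walk.isPath_def, SimpleGraph.Walk.support_reverse]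
      exact List.nodup_reverse.mpr hPnd
    · rw [SimpleGraph.Walk.edges_reverse]
      intro hmem
      rw [List.mem_reverse] at hmem
      exact startEdge_not_mem_edges G P hPnd (by omega) hmem
  · simp [SimpleGraph.Walk.length_reverse, hPlen]


structure Setup (G : SimpleGraph V) (u : V) (f : ℕ → V) (n : ℕ) : Prop where
  hn : 3 ≤ n
  hadj : ∀ i, G.Adj (f i) (f (i+1))
  hinj : ∀ i j, i < n → j < n → f i = f j → i = j
  hn0 : f n = f 0
  hu1 : G.Adj u (f 1)
  hu2 : G.Adj u (f (n-1))
  hlong : ∀ L : List ℕ, L.length = n → L.Nodup → (∀ i ∈ L, i < n) →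
    List.Chain G.Adj u (L.map f) → (∀ j ∈ L.getLast?, G.Adj (f j) u) → False

namespace Setup

variable {G : SimpleGraph V} {u : V} {f : ℕ → V} {n : ℕ}

lemma adjC (S : Setup G u f n) {i j i' j' : ℕ} (h : G.Adj (f i) (f j))
    (hi : i' = i) (hj : j' = j) : G.Adj (f i') (f j') := by rw [hi, hj]; exact h

lemma adjS (S : Setup G u f n) {i j : ℕ} (h : j = i + 1) : G.Adj (f i) (f j) := by
  rw [h]; exact S.hadj i

lemma adjP (S : Setup G u f n) {i j : ℕ} (h : i = j + 1) : G.Adj (f i) (f j) := by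
  rw [h]; exact (S.hadj j).symm

lemma adjW1 (S : Setup G u f n) : G.Adj (f (n-1)) (f 0) := by
  have hn := S.hn
  have h := S.hadj (n-1)
  rw [show n - 1 + 1 = n by omega, S.hn0] at h
  exact h

lemma adjW2 (S : Setup G u f n) : G.Adj (f 0) (f (n-1)) := S.adjW1.symm

/-- The workhorse: a permutation `g` of `[0,n)` arranged so that consecutive images are
adjacent and the ends attach to `u` yields a contradiction. -/
lemma buildFalse (S : Setup G u f n) (g : ℕ → ℕ)
    (hg_inj : ∀ i j, i < n → j < n → g i = g j → i = j)
    (hg_lt : ∀ i, i < n → g i < n)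
    (h0 : G.Adj u (f (g 0)))
    (hstep : ∀ i, i + 1 < n → G.Adj (f (g i)) (f (g (i+1))))
    (hlast : G.Adj (f (g (n-1))) u) : False := by
  have hn := S.hn
  refine S.hlong ((List.range n).map g) (by simp) ?_ ?_ ?_ ?_
  · exact List.Nodup.map_on (fun x hx y hy h => hg_inj x y (List.mem_range.mp hx) (List.mem_range.mp hy) h) List.nodup_range
  · intro i hi
    simp only [List.mem_map, List.mem_range] at hi
    obtain ⟨j, hj, rfl⟩ := hi
    exact hg_lt j hj
  · rw [List.map_map]
    show List.IsChain G.Adj (u :: _)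
    rw [List.isChain_iff_getElem]
    intro i hi
    cases i with
    | zero => simpa using h0
    | succ i =>
      simp only [List.length_cons, List.length_map, List.length_range] at hi
      simp only [List.getElem_cons_succ, List.getElem_map, List.getElem_range, Function.comp_apply]
      exact hstep i (by omega)
  · intro j hj
    have hne : ((List.range n).map g) ≠ [] := by
      simp only [ne_eq, List.map_eq_nil_iff, List.range_eq_nil]; omega
    rw [List.getLast?_eq_getLast hne] at hj
    have : ((List.range n).map g).getLast hne = g (n-1) := by
      rw [List.getLast_eq_getElem]
      simp only [List.length_map, List.length_range, List.getElem_map, List.getElem_range]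
    rw [this] at hj
    cases hj
    exact hlast


section Cases
variable {G : SimpleGraph V} {u : V} {f : ℕ → V} {n p q : ℕ}

/-- two consecutive neighbours of `u` on the cycle give a longer cycle -/
lemma consecFalse (S : Setup G u f n) {j : ℕ} (hj : j + 1 ≤ n - 1) (h1 : G.Adj u (f j))
    (h2 : G.Adj u (f (j + 1))) : False := by
  have hn := S.hn
  apply S.buildFalse (fun i => if i ≤ j then j - i else n + j - i)
  · intro i1 j1 hi1 hj1 h3; (try dsimp only at h3); split_ifs at h3 <;> omega
  · intro i hi; (try dsimp only); split_ifs <;> omega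
  · (try dsimp only); rw [if_pos (Nat.zero_le j), Nat.sub_zero]; exact h1
  · intro i hi; (try dsimp only)
    split_ifs <;> first
      | (exfalso; first | assumption | omega)
      | exact S.adjP (by omega)
      | exact S.adjS (by omega)
      | exact S.adjC S.adjW2 (by omega) (by omega)
  · (try dsimp only); rw [if_neg (by omega), show n + j - (n - 1) = j + 1 by omega]
    exact h2.symm

/-- case q = n-1, bp ∈ N(u) -/
lemma L1a (S : Setup G u f n) (hp2 : 2 ≤ p) (hpn : p ≤ n - 2)
    (hch0 : G.Adj (f (p - 1)) (f 0)) (hbu : G.Adj u (f p)) : False := by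
  have hn := S.hn
  apply S.buildFalse (fun i => if i ≤ p - 2 then i + 1 else if i = p - 1 then 0 else n - 1 - i + p)
  · intro i1 j1 hi1 hj1 h3; (try dsimp only at h3); split_ifs at h3 <;> omega
  · intro i hi; (try dsimp only); split_ifs <;> omega
  · (try dsimp only); rw [if_pos (by omega)]; exact S.hu1
  · intro i hi; (try dsimp only)
    split_ifs <;> first
      | (exfalso; first | assumption | omega)
      | exact S.adjP (by omega)
      | exact S.adjS (by omega)
      | exact S.adjC S.adjW2 (by omega) (by omega)
      | exact S.adjC hch0 (by omega) (by omega)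
  · (try dsimp only); rw [if_neg (by omega), if_neg (by omega), show n - 1 - (n - 1) + p = p by omega]
    exact hbu.symm

/-- case q = n-1, bp ∈ N(v) -/
lemma L1b (S : Setup G u f n) (hp2 : 2 ≤ p) (hpn : p ≤ n - 2)
    (hch0 : G.Adj (f (p - 1)) (f 0)) (hbv : G.Adj (f 0) (f p)) : False := by
  have hn := S.hn
  apply S.buildFalse (fun i => if i ≤ p - 2 then i + 1 else if i = p - 1 then 0 else i)
  · intro i1 j1 hi1 hj1 h3; (try dsimp only at h3); split_ifs at h3 <;> omega
  · intro i hi; (try dsimp only); split_ifs <;> omega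
  · (try dsimp only); rw [if_pos (by omega)]; exact S.hu1
  · intro i hi; (try dsimp only)
    split_ifs <;> first
      | (exfalso; first | assumption | omega)
      | exact S.adjP (by omega)
      | exact S.adjS (by omega)
      | exact S.adjC hch0 (by omega) (by omega)
      | exact S.adjC hbv (by omega) (by omega)
  · (try dsimp only); rw [if_neg (by omega), if_neg (by omega)]
    exact S.hu2.symm


lemma L2 (S : Setup G u f n) (hp : 1 ≤ p) (hpq : p < q) (hq2 : q ≤ n - 2)
    (hch : G.Adj (f (p - 1)) (f (q + 1))) (hbu : G.Adj u (f p)) (hqv : G.Adj (f 0) (f q)) : False := by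
  have hn := S.hn
  apply S.buildFalse (fun i => if i ≤ n-2-q then n-1-i else if i ≤ n-2-q+(p-1) then n+p-2-q-i else if i = n+p-2-q then 0 else n+p-1-i)
  · intro i1 j1 hi1 hj1 h3; (try dsimp only at h3); split_ifs at h3 <;> omega
  · intro i hi; (try dsimp only); split_ifs <;> omega
  · (try dsimp only); rw [if_pos (by omega), Nat.sub_zero]; exact S.hu2
  · intro i hi; (try dsimp only)
    split_ifs <;> first
      | (exfalso; first | assumption | omega)
      | exact S.adjP (by omega)
      | exact S.adjS (by omega)
      | exact S.adjC S.adjW1 (by omega) (by omega)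
      | exact S.adjC S.adjW2 (by omega) (by omega)
      | exact S.adjC hch.symm (by omega) (by omega)
      | exact S.adjC hqv (by omega) (by omega)
  · (try dsimp only); rw [if_neg (by omega), if_neg (by omega), if_neg (by omega), show n+p-1-(n-1) = p by omega]; exact hbu.symm

lemma LB2 (S : Setup G u f n) (hx : G.Adj (f 0) (f 2)) : False := by
  have hn := S.hn
  apply S.buildFalse (fun i => if i ≤ n-3 then n-1-i else if i = n-2 then 0 else 1)
  · intro i1 j1 hi1 hj1 h3; (try dsimp only at h3); split_ifs at h3 <;> omega
  · intro i hi; (try dsimp only); split_ifs <;> omega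
  · (try dsimp only); rw [if_pos (by omega), Nat.sub_zero]; exact S.hu2
  · intro i hi; (try dsimp only)
    split_ifs <;> first
      | (exfalso; first | assumption | omega)
      | exact S.adjP (by omega)
      | exact S.adjS (by omega)
      | exact S.adjC S.adjW1 (by omega) (by omega)
      | exact S.adjC S.adjW2 (by omega) (by omega)
      | exact S.adjC hx.symm (by omega) (by omega)
  · (try dsimp only); rw [if_neg (by omega), if_neg (by omega)]; exact S.hu1.symm

lemma LBpq (S : Setup G u f n) (hp : 1 ≤ p) (hq : q = p + 1) (hq2 : q ≤ n - 2)
    (hbv : G.Adj (f 0) (f p)) (hqv : G.Adj (f 0) (f q)) : False := by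
  have hn := S.hn
  apply S.buildFalse (fun i => if i ≤ p-1 then i+1 else if i = p then 0 else i)
  · intro i1 j1 hi1 hj1 h3; (try dsimp only at h3); split_ifs at h3 <;> omega
  · intro i hi; (try dsimp only); split_ifs <;> omega
  · (try dsimp only); rw [if_pos (by omega)]; exact S.hu1
  · intro i hi; (try dsimp only)
    split_ifs <;> first
      | (exfalso; first | assumption | omega)
      | exact S.adjP (by omega)
      | exact S.adjS (by omega)
      | exact S.adjC S.adjW1 (by omega) (by omega)
      | exact S.adjC S.adjW2 (by omega) (by omega)
      | exact S.adjC hbv.symm (by omega) (by omega)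
      | exact S.adjC hqv (by omega) (by omega)
  · (try dsimp only); rw [if_neg (by omega), if_neg (by omega)]; exact S.hu2.symm

lemma L4 (S : Setup G u f n) (hp3 : 3 ≤ p) (hpq2 : p + 2 ≤ q) (hq3 : q ≤ n - 3)
    (hch : G.Adj (f (p - 1)) (f (q + 1))) (hqu : G.Adj u (f q)) (hx : G.Adj (f p) (f (n - 2))) : False := by
  have hn := S.hn
  apply S.buildFalse (fun i => if i ≤ q-p then q-i else if i ≤ n-2-p then n-1-i+q-p else if i ≤ n-2 then n-2-i else n-1)
  · intro i1 j1 hi1 hj1 h3; (try dsimp only at h3); split_ifs at h3 <;> omega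
  · intro i hi; (try dsimp only); split_ifs <;> omega
  · (try dsimp only); rw [if_pos (by omega), Nat.sub_zero]; exact hqu
  · intro i hi; (try dsimp only)
    split_ifs <;> first
      | (exfalso; first | assumption | omega)
      | exact S.adjP (by omega)
      | exact S.adjS (by omega)
      | exact S.adjC S.adjW1 (by omega) (by omega)
      | exact S.adjC S.adjW2 (by omega) (by omega)
      | exact S.adjC hx (by omega) (by omega)
      | exact S.adjC hch.symm (by omega) (by omega)
  · (try dsimp only); rw [if_neg (by omega), if_neg (by omega), if_neg (by omega)]; exact S.hu2.symm

lemma L5 (S : Setup G u f n) (hp3 : 3 ≤ p) (hpq2 : p + 2 ≤ q) (hq3 : q ≤ n - 3)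
    (hch : G.Adj (f (p - 1)) (f (q + 1))) (hbu : G.Adj u (f p)) (hx : G.Adj (f q) (f (n - 2))) : False := by
  have hn := S.hn
  apply S.buildFalse (fun i => if i = 0 then n-1 else if i = 1 then 0 else if i ≤ p then i-1 else if i ≤ n-2-q+p then q+i-p else n+p-1-i)
  · intro i1 j1 hi1 hj1 h3; (try dsimp only at h3); split_ifs at h3 <;> omega
  · intro i hi; (try dsimp only); split_ifs <;> omega
  · (try dsimp only); rw [if_pos rfl]; exact S.hu2
  · intro i hi; (try dsimp only)
    split_ifs <;> first
      | (exfalso; first | assumption | omega)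
      | exact S.adjP (by omega)
      | exact S.adjS (by omega)
      | exact S.adjC S.adjW1 (by omega) (by omega)
      | exact S.adjC S.adjW2 (by omega) (by omega)
      | exact S.adjC hch (by omega) (by omega)
      | exact S.adjC hx.symm (by omega) (by omega)
  · (try dsimp only); rw [if_neg (by omega), if_neg (by omega), if_neg (by omega), if_neg (by omega), show n+p-1-(n-1) = p by omega]; exact hbu.symm

lemma L6 (S : Setup G u f n) (hp3 : 3 ≤ p) (hpq2 : p + 2 ≤ q) (hq3 : q ≤ n - 3)
    (hch : G.Adj (f (p - 1)) (f (q + 1))) (hqv : G.Adj (f 0) (f q)) (hx : G.Adj (f p) (f (n - 2))) : False := by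
  have hn := S.hn
  apply S.buildFalse (fun i => if i ≤ p-2 then i+1 else if i ≤ n+p-q-4 then q+2+i-p else if i ≤ n-3 then i+q+3-n else if i = n-2 then 0 else n-1)
  · intro i1 j1 hi1 hj1 h3; (try dsimp only at h3); split_ifs at h3 <;> omega
  · intro i hi; (try dsimp only); split_ifs <;> omega
  · (try dsimp only); rw [if_pos (by omega)]; exact S.hu1
  · intro i hi; (try dsimp only)
    split_ifs <;> first
      | (exfalso; first | assumption | omega)
      | exact S.adjP (by omega)
      | exact S.adjS (by omega)
      | exact S.adjC S.adjW1 (by omega) (by omega)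
      | exact S.adjC S.adjW2 (by omega) (by omega)
      | exact S.adjC hch (by omega) (by omega)
      | exact S.adjC hx.symm (by omega) (by omega)
      | exact S.adjC hqv.symm (by omega) (by omega)
  · (try dsimp only); rw [if_neg (by omega), if_neg (by omega), if_neg (by omega), if_neg (by omega)]; exact S.hu2.symm

lemma L7 (S : Setup G u f n) (hp3 : 3 ≤ p) (hpq2 : p + 2 ≤ q) (hq3 : q ≤ n - 3)
    (hch : G.Adj (f (p - 1)) (f (q + 1))) (hbv : G.Adj (f 0) (f p)) (hx : G.Adj (f q) (f (n - 2))) : False := by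
  have hn := S.hn
  apply S.buildFalse (fun i => if i ≤ p-2 then i+1 else if i ≤ n+p-q-4 then q+2+i-p else if i ≤ n-3 then n+p-3-i else if i = n-2 then 0 else n-1)
  · intro i1 j1 hi1 hj1 h3; (try dsimp only at h3); split_ifs at h3 <;> omega
  · intro i hi; (try dsimp only); split_ifs <;> omega
  · (try dsimp only); rw [if_pos (by omega)]; exact S.hu1
  · intro i hi; (try dsimp only)
    split_ifs <;> first
      | (exfalso; first | assumption | omega)
      | exact S.adjP (by omega)
      | exact S.adjS (by omega)
      | exact S.adjC S.adjW1 (by omega) (by omega)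
      | exact S.adjC S.adjW2 (by omega) (by omega)
      | exact S.adjC hch (by omega) (by omega)
      | exact S.adjC hx.symm (by omega) (by omega)
      | exact S.adjC hbv.symm (by omega) (by omega)
  · (try dsimp only); rw [if_neg (by omega), if_neg (by omega), if_neg (by omega), if_neg (by omega)]; exact S.hu2.symm


/-- reverse orientation of the cycle -/
def frev (f : ℕ → V) (n : ℕ) : ℕ → V := fun i => f (n - i % n)

lemma frev_eq {f : ℕ → V} {n i : ℕ} (h1 : 0 < i) (h2 : i < n) : frev f n i = f (n - i) := by
  unfold frev; rw [Nat.mod_eq_of_lt h2]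

lemma frev_zero {f : ℕ → V} {n : ℕ} : frev f n 0 = f n := by
  unfold frev; simp

lemma rev {G : SimpleGraph V} {u : V} {f : ℕ → V} {n : ℕ} (S : Setup G u f n) :
    Setup G u (frev f n) n := by
  have hn := S.hn
  have hnpos : 0 < n := by omega
  constructor
  case hn => exact hn
  case hadj =>
    intro i
    set r := i % n with hr
    have hrlt : r < n := Nat.mod_lt _ hnpos
    have hstep : (i + 1) % n = (r + 1) % n := by
      rw [hr]; exact (Nat.mod_add_mod i n 1).symm
    by_cases hc : r = n - 1
    · have h1 : (i + 1) % n = 0 := by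
        rw [hstep, hc, show n - 1 + 1 = n by omega, Nat.mod_self]
      show G.Adj (f (n - i % n)) (f (n - (i + 1) % n))
      rw [← hr, h1, hc, Nat.sub_zero, S.hn0, show n - (n-1) = 1 by omega]
      exact (S.hadj 0).symm
    · have h1 : (i + 1) % n = r + 1 := by
        rw [hstep, Nat.mod_eq_of_lt (by omega)]
      show G.Adj (f (n - i % n)) (f (n - (i + 1) % n))
      rw [← hr, h1]
      exact S.adjP (by omega)
  case hinj =>
    intro i j hi hj h
    unfold frev at h
    rw [Nat.mod_eq_of_lt hi, Nat.mod_eq_of_lt hj] at h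
    rcases Nat.eq_zero_or_pos i with hi0 | hi0 <;> rcases Nat.eq_zero_or_pos j with hj0 | hj0
    · omega
    · subst hi0; rw [Nat.sub_zero, S.hn0] at h
      have := S.hinj 0 (n - j) (by omega) (by omega) h; omega
    · subst hj0; rw [Nat.sub_zero, S.hn0] at h
      have := S.hinj (n - i) 0 (by omega) (by omega) h; omega
    · have := S.hinj (n - i) (n - j) (by omega) (by omega) h; omega
  case hn0 =>
    show f (n - n % n) = f (n - 0 % n)
    rw [Nat.mod_self, Nat.zero_mod]
  case hu1 =>
    show G.Adj u (f (n - 1 % n))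
    rw [Nat.mod_eq_of_lt (by omega)]
    exact S.hu2
  case hu2 =>
    show G.Adj u (f (n - (n - 1) % n))
    rw [Nat.mod_eq_of_lt (by omega), show n - (n - 1) = 1 by omega]
    exact S.hu1
  case hlong =>
    intro L hlen hnd hlt hchain hlast
    set σ : ℕ → ℕ := fun i => (n - i) % n with hσ
    have hσeq : ∀ i ∈ L, f (σ i) = frev f n i := by
      intro i hi
      have hilt := hlt i hi
      unfold frev
      rw [Nat.mod_eq_of_lt hilt, hσ]
      rcases Nat.eq_zero_or_pos i with h0 | h0
      · subst h0; simp [Nat.mod_self, S.hn0]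
      · show f ((n - i) % n) = f (n - i)
        rw [Nat.mod_eq_of_lt (by omega)]
    apply S.hlong (L.map σ)
    · simp [hlen]
    · refine List.Nodup.map_on ?_ hnd
      intro x hx y hy h
      have hxl := hlt x hx; have hyl := hlt y hy
      rw [hσ] at h; dsimp only at h
      rcases Nat.eq_zero_or_pos x with h0 | h0 <;> rcases Nat.eq_zero_or_pos y with h1 | h1
      · omega
      · subst h0; rw [Nat.sub_zero, Nat.mod_self, Nat.mod_eq_of_lt (by omega)] at h; omega
      · subst h1; rw [Nat.sub_zero, Nat.mod_self, Nat.mod_eq_of_lt (by omega)] at h; omega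
      · rw [Nat.mod_eq_of_lt (by omega), Nat.mod_eq_of_lt (by omega)] at h; omega
    · intro i hi
      simp only [List.mem_map] at hi
      obtain ⟨j, hj, rfl⟩ := hi
      exact Nat.mod_lt _ hnpos
    · rw [List.map_map]
      have : L.map (f ∘ σ) = L.map (frev f n) := List.map_congr_left hσeq
      rw [this]
      exact hchain
    · intro j hj
      rw [List.getLast?_map] at hj
      cases ho : L.getLast? with
      | none => rw [ho] at hj; simp at hj
      | some j' =>
        rw [ho] at hj
        simp only [Option.map_some] at hj
        cases hj
        have hmem : j' ∈ L := List.mem_of_mem_getLast? (by rw [ho]; rfl)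
        rw [hσeq j' hmem]
        exact hlast j' (by rw [ho]; rfl)


end Cases

end Setup

section Outer
variable [DecidableEq V] {G : SimpleGraph V} {a : V} {c : G.Walk a a}

lemma outer (hcyc : c.IsCycle) (v : V) (hv : v ∈ c.support) :
    ∃ f : ℕ → V, f 0 = v ∧ (∀ i, f i ∈ c.support) ∧
      (∀ i, G.Adj (f i) (f (i+1))) ∧
      (∀ i j, i < c.length → j < c.length → f i = f j → i = j) ∧
      (f c.length = f 0) ∧
      (∀ i, cSucc c (f i) = f (i+1)) ∧
      (∀ i, cPred c (f (i+1)) = f i) ∧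
      (∀ x, x ∈ c.support → ∃ i, i < c.length ∧ f i = x) ∧
      (∀ x, x ∉ c.support → cSucc c x = x) ∧
      (∀ i, f (i + c.length) = f i) := by
  set n := c.length with hndef
  have hn3 : 3 ≤ n := hcyc.three_le_length
  have hnpos : 0 < n := by omega
  have hTnd : c.support.tail.Nodup := hcyc.support_nodup
  set T := c.support.tail with hT
  have hsup : c.support = a :: T := c.support_eq_cons
  have hTlen : T.length = n := by
    have h1 := c.length_support
    rw [hsup] at h1
    simpa using h1
  have hTne : T ≠ [] := by
    intro h; rw [h] at hTlen; simp at hTlen; omega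
  have h3 := c.getLast_support
  have h2 : c.support.getLast? = some a := by
    rw [List.getLast?_eq_getLast (l := c.support) (by simp)]
    exact congrArg some h3
  obtain ⟨t, T', hTT⟩ := List.exists_cons_of_ne_nil hTne
  have haT? : T.getLast? = some a := by
    rw [hsup] at h2
    rw [hTT]
    rw [hTT] at h2
    rwa [List.getLast?_cons_cons] at h2
  have haLast : T.getLast hTne = a := by
    have := List.getLast?_eq_getLast hTne
    rw [this] at haT?
    exact Option.some_injective _ haT?
  have hgetcongr : ∀ {x y : ℕ} (hx : x < T.length) (hy : y < T.length), x = y →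
      T.get ⟨x, hx⟩ = T.get ⟨y, hy⟩ := by
    intro x y hx hy h; subst h; rfl
  have haLast' : T.get ⟨T.length - 1, by omega⟩ = a :=
    (List.getLast_eq_getElem hTne).symm.trans haLast
  have haGet : T.get ⟨n - 1, by omega⟩ = a :=
    (hgetcongr _ _ (by omega)).trans haLast'

  -- chain of adjacencies
  have hchain := SimpleGraph.Walk.isChain_adj_support c
  rw [hsup, List.isChain_iff_getElem] at hchain
  -- (a :: T).get ⟨i+1⟩ is defeq to T.get ⟨i⟩
  have hTadj : ∀ j (hj : j < n - 1), G.Adj (T.get ⟨j, by omega⟩) (T.get ⟨j + 1, by omega⟩) := by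
    intro j hj
    have := hchain (j + 1) (by simp [hTlen]; omega)
    exact this
  have hTwrap : G.Adj (T.get ⟨n - 1, by omega⟩) (T.get ⟨0, by omega⟩) := by
    rw [haGet]
    have := hchain 0 (by simp [hTlen]; omega)
    exact this
  -- the indexing function
  obtain ⟨⟨iv, hivlt⟩, hivget⟩ := List.get_of_mem (show v ∈ T by
    rw [hsup] at hv
    rcases List.mem_cons.mp hv with h | h
    · subst h; exact List.mem_of_mem_getLast? (by rw [haT?]; rfl)
    · exact h)
  set gT : ℕ → V := fun j => T.get ⟨j % n, by rw [hTlen]; exact Nat.mod_lt _ hnpos⟩ with hgT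
  have hgT_adj : ∀ j, G.Adj (gT j) (gT (j + 1)) := by
    intro j
    show G.Adj (T.get ⟨j % n, _⟩) (T.get ⟨(j+1) % n, _⟩)
    have hr : (j + 1) % n = (j % n + 1) % n := (Nat.mod_add_mod j n 1).symm
    by_cases hc2 : j % n = n - 1
    · have h0 : (j + 1) % n = 0 := by
        rw [hr, hc2, show n - 1 + 1 = n by omega, Nat.mod_self]
      have e1 := hgetcongr (show j % n < T.length by rw [hTlen]; exact Nat.mod_lt _ hnpos)
        (show n - 1 < T.length by omega) hc2
      rw [e1]
      have e2 := hgetcongr (show (j+1) % n < T.length by rw [hTlen]; exact Nat.mod_lt _ hnpos)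
        (show 0 < T.length by omega) h0
      rw [e2]
      exact hTwrap
    · have hlt : j % n < n - 1 := by
        have := Nat.mod_lt j hnpos; omega
      have h0 : (j + 1) % n = j % n + 1 := by
        rw [hr, Nat.mod_eq_of_lt (by omega)]
      have e2 := hgetcongr (show (j+1) % n < T.length by rw [hTlen]; exact Nat.mod_lt _ hnpos)
        (show j % n + 1 < T.length by omega) h0
      rw [e2]
      exact hTadj _ hlt
  have hgT_inj : ∀ j k, gT j = gT k → j % n = k % n := by
    intro j k h
    have := hTnd.get_inj_iff.mp h
    exact congrArg Fin.val this
  have hgT_mem : ∀ j, gT j ∈ T := fun j => T.get_mem _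
  have hivn : iv < n := by
    rw [hTlen] at hivlt; exact hivlt
  have hfs : ∀ i, cSucc c (gT (iv + i)) = gT (iv + (i+1)) := by
    intro i
    have hmem : gT (iv + i) ∈ T := hgT_mem _
    show cSucc c (gT (iv + i)) = gT (iv + (i+1))
    unfold cSucc
    rw [dif_pos (show gT (iv+i) ∈ c.support.tail from hmem)]
    have hng := List.next_getElem T hTnd ((iv+i) % n) (by rw [hTlen]; exact Nat.mod_lt _ hnpos)
    exact hng.trans (hgetcongr _ _ (show ((iv+i) % n + 1) % T.length = (iv+(i+1)) % n by
      rw [hTlen]; exact Nat.mod_add_mod _ _ _))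
  have hfp : ∀ i, cPred c (gT (iv + (i+1))) = gT (iv + i) := by
    intro i
    rw [← hfs i]
    have hmem : gT (iv + i) ∈ T := hgT_mem _
    have h5 : cSucc c (gT (iv + i)) = T.next (gT (iv+i)) hmem := by
      unfold cSucc; rw [dif_pos (show gT (iv+i) ∈ c.support.tail from hmem)]
    rw [h5]
    unfold cPred
    rw [dif_pos (show T.next (gT (iv+i)) hmem ∈ c.support.tail from List.next_mem _ _ _)]
    exact List.prev_next T hTnd _ hmem
  refine ⟨fun i => gT (iv + i), ?_, ?_, ?_, ?_, ?_, hfs, hfp, ?_, ?_, ?_⟩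
  · show gT (iv + 0) = v
    rw [← hivget]
    exact hgetcongr _ _ (by rw [Nat.add_zero, Nat.mod_eq_of_lt hivn])
  · intro i; rw [hsup]; exact List.mem_cons_of_mem _ (hgT_mem _)
  · intro i; exact hgT_adj _
  · intro i j hi hj h
    have h1 := hgT_inj _ _ h
    have h2 : i ≡ j [MOD n] := Nat.ModEq.add_left_cancel' iv h1
    have h4 : i % n = j % n := h2
    rwa [Nat.mod_eq_of_lt hi, Nat.mod_eq_of_lt hj] at h4
  · show gT (iv + n) = gT (iv + 0)
    apply hgetcongr
    simp [Nat.add_mod_right]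
  · -- surjectivity
    intro x hx
    have hxT : x ∈ T := by
      rw [hsup] at hx
      rcases List.mem_cons.mp hx with h | h
      · subst h; exact List.mem_of_mem_getLast? (by rw [haT?]; rfl)
      · exact h
    obtain ⟨⟨jx, hjxlt⟩, hjxget⟩ := List.get_of_mem hxT
    have hjxn : jx < n := by rw [hTlen] at hjxlt; exact hjxlt
    refine ⟨(jx + n - iv) % n, Nat.mod_lt _ hnpos, ?_⟩
    show gT (iv + (jx + n - iv) % n) = x
    rw [← hjxget]
    exact hgetcongr _ _ (by
      rw [Nat.add_mod_mod, show iv + (jx + n - iv) = jx + n by omega,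
        Nat.add_mod_right, Nat.mod_eq_of_lt hjxn])
  · intro x hx
    unfold cSucc
    rw [dif_neg]
    intro h
    exact hx (by rw [hsup]; exact List.mem_cons_of_mem _ h)
  · intro i
    show gT (iv + (i + n)) = gT (iv + i)
    apply hgetcongr
    rw [show iv + (i + n) = (iv + i) + n by omega, Nat.add_mod_right]


end Outer

lemma mkSetup [DecidableEq V] {G : SimpleGraph V} {a : V} {c : G.Walk a a}
    (hc : IsLongestCycle G c) {u v : V} (hu : u ∉ c.support) (hv : v ∈ c.support)
    (huv1 : G.Adj u (cSucc c v)) (huv2 : G.Adj u (cPred c v)) :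
    ∃ f : ℕ → V, Setup G u f c.length ∧ f 0 = v ∧
      (∀ i, cSucc c (f i) = f (i+1)) ∧ (∀ i, cPred c (f (i+1)) = f i) ∧
      (∀ x, x ∈ c.support → ∃ i, i < c.length ∧ f i = x) ∧ (∀ i, f i ∈ c.support) ∧
      (∀ i, f (i + c.length) = f i) ∧ (∀ x, x ∉ c.support → cSucc c x = x) := by
  obtain ⟨f, hf0, hfmem, hfadj, hfinj, hfn0, hfs, hfp, hsurj, hfix, hper⟩ := outer hc.1 v hv
  have hn3 : 3 ≤ c.length := hc.1.three_le_length
  refine ⟨f, ⟨hn3, hfadj, hfinj, hfn0, ?_, ?_, ?_⟩, hf0, hfs, hfp, hsurj, hfmem, hper, hfix⟩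
  · rw [← hf0, hfs 0] at huv1
    exact huv1
  · have h := huv2
    rw [← hf0, ← hfn0, show c.length = (c.length-1)+1 by omega, hfp (c.length-1)] at h
    exact h
  · intro L hlen hnd hlt hchain hlast
    have hLne : L ≠ [] := by intro h; rw [h] at hlen; simp at hlen; omega
    have hMne : L.map f ≠ [] := by simpa using hLne
    have hnd2 : (u :: L.map f).Nodup := by
      rw [List.nodup_cons]
      constructor
      · intro hmem
        obtain ⟨i, hiL, hfi⟩ := List.mem_map.mp hmem
        exact hu (hfi ▸ hfmem i)
      · exact List.Nodup.map_on (fun x hx y hy h => hfinj x y (hlt x hx) (hlt y hy) h) hnd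
    have hcl : G.Adj ((u :: L.map f).getLast (List.cons_ne_nil _ _)) u := by
      have e1 : (L.map f).getLast hMne = f (L.getLast hLne) := by
        have e2 := List.getLast?_map (f := f) (l := L)
        rw [List.getLast?_eq_getLast hMne, List.getLast?_eq_getLast hLne] at e2
        simpa using e2
      rw [List.getLast_cons hMne, e1]
      exact hlast _ (by rw [List.getLast?_eq_getLast hLne]; rfl)
    obtain ⟨w, hwcyc, hwlen⟩ := exists_cycle_of_list G u (L.map f) hnd2 hchain
      (by rw [List.length_map, hlen]; omega) hcl
    have hle := hc.2 u w hwcyc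
    rw [hwlen, List.length_map, hlen] at hle
    omega

theorem stmt17 {V : Type*} [Fintype V] [DecidableEq V] (G : SimpleGraph V)
    (hn : 3 ≤ Fintype.card V) (htough : OneTough G) (hsig : Fintype.card V ≤ sigma3 G)
    (hham : ¬ G.IsHamiltonian) {a : V} (c : G.Walk a a) (hc : IsLongestCycle G c)
    (u v : V) (hu : u ∉ c.support) (hv : v ∈ c.support)
    (huv1 : G.Adj u (cSucc c v)) (huv2 : G.Adj u (cPred c v))
    (B : Set V) (hB : B = G.neighborSet u ∪ G.neighborSet v)
    (bp bq a' c' : V) (hbp : bp ∈ B) (hbq : bq ∈ B) (horder : bq ∈ arc c bp v)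
    (ha' : a' = cPred c bp) (hc' : c' = cSucc c bq) (hac : a' ≠ c') (hadj : G.Adj a' c') :
    ((bp ∈ G.neighborSet u \ G.neighborSet v ∧ bq ∈ G.neighborSet u \ G.neighborSet v) ∨
     (bp ∈ G.neighborSet v \ G.neighborSet u ∧ bq ∈ G.neighborSet v \ G.neighborSet u)) ∧
    ¬ G.Adj bp (cPred c (cPred c v)) ∧ ¬ G.Adj bp (cSucc c (cSucc c v)) ∧
    ¬ G.Adj bq (cPred c (cPred c v)) ∧ ¬ G.Adj bq (cSucc c (cSucc c v)) := by
  obtain ⟨f, S, hf0, hfs, hfp, hsurj, hfmem, hper, hfix⟩ := mkSetup hc hu hv huv1 huv2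
  set n := c.length with hndef
  have hn3 : 3 ≤ n := S.hn
  -- iterate lemma
  have hfsIter : ∀ k i, (cSucc c)^[k] (f i) = f (i + k) := by
    intro k
    induction k with
    | zero => intro i; simp
    | succ m ih =>
      intro i
      rw [Function.iterate_succ_apply', ih i, hfs]
      try exact congrArg f (by omega)
  have hfcongr : ∀ {i j : ℕ}, i = j → f i = f j := fun h => by rw [h]
  -- locate bp, bq on the cycle
  obtain ⟨i0, k0, hi0pos, hik, hkn, hbpk, hbqe⟩ := horder
  have hbpsup : bp ∈ c.support := by
    by_contra hns
    have hstep : (cSucc c)^[k0] bp = bp := Function.iterate_fixed (hfix bp hns) k0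
    rw [hstep] at hbpk
    exact hns (hbpk ▸ hv)
  obtain ⟨p0, hp0lt, hfp0⟩ := hsurj bp hbpsup
  have hv0 : f (p0 + k0) = f 0 := by
    rw [← hfsIter k0 p0, hfp0, hbpk, hf0]
  have hpk : p0 + k0 = n := by
    by_cases hcase : p0 + k0 < n
    · have := S.hinj _ _ hcase (by omega) hv0
      omega
    · have h1 : p0 + k0 - n < n := by omega
      have h2 : f (p0 + k0 - n) = f 0 := by
        rw [← hv0, ← hper (p0 + k0 - n)]
        congr 1
        omega
      have := S.hinj _ _ h1 (by omega) h2
      omega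
  have hp1 : 1 ≤ p0 := by omega
  set q := p0 + i0 with hqdef
  have hfq : f q = bq := by rw [hbqe, ← hfp0, hfsIter]
  have hqlt : q ≤ n - 1 := by omega
  have hpq : p0 < q := by omega
  -- a' and c' in terms of f
  have ha'f : a' = f (p0 - 1) := by
    rw [ha', ← hfp0, hfcongr (show p0 = (p0-1)+1 by omega), hfp (p0-1)]
  have hc'f : c' = f (q + 1) := by rw [hc', ← hfq, hfs]
  have hchord : G.Adj (f (p0-1)) (f (q+1)) := by rw [← ha'f, ← hc'f]; exact hadj
  -- membership of bp, bq in B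
  have hbpB : G.Adj u (f p0) ∨ G.Adj (f 0) (f p0) := by
    rw [hfp0, hf0, hB] at *
    rcases hbp with h | h
    · exact Or.inl h
    · exact Or.inr h
  have hbqB : G.Adj u (f q) ∨ G.Adj (f 0) (f q) := by
    rw [hfq, hf0, hB] at *
    rcases hbq with h | h
    · exact Or.inl h
    · exact Or.inr h
  -- q ≤ n - 2
  have hqn : q ≤ n - 2 := by
    by_contra hcon
    have hq1 : q = n - 1 := by omega
    have hqn1 : q + 1 = n := by omega
    have hch0 : G.Adj (f (p0-1)) (f 0) := by rw [hqn1, S.hn0] at hchord; exact hchord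
    have hp2 : 2 ≤ p0 := by
      by_contra hp2
      have hp01 : p0 = 1 := by omega
      exact hac (by rw [ha'f, hc'f, hp01, hqn1, S.hn0])
    rcases hbpB with h1 | h1
    · exact Setup.L1a S hp2 (by omega) hch0 h1
    · exact Setup.L1b S hp2 (by omega) hch0 h1
  -- no mixed cases
  have hM1 : ¬ (G.Adj u (f p0) ∧ G.Adj (f 0) (f q)) := fun ⟨h1, h2⟩ =>
    Setup.L2 S hp1 hpq hqn hchord h1 h2
  have hM2 : ¬ (G.Adj (f 0) (f p0) ∧ G.Adj u (f q)) := by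
    rintro ⟨h1, h2⟩
    by_cases hp2 : 2 ≤ p0
    · refine Setup.L2 (Setup.rev S) (p := n - q) (q := n - p0) (by omega) (by omega) (by omega)
        ?_ ?_ ?_
      · rw [Setup.frev_eq (by omega) (by omega), Setup.frev_eq (by omega) (by omega),
          show n - (n - q - 1) = q + 1 by omega, show n - (n - p0 + 1) = p0 - 1 by omega]
        exact hchord.symm
      · rw [Setup.frev_eq (by omega) (by omega), show n - (n - q) = q by omega]
        exact h2
      · rw [Setup.frev_zero, S.hn0, Setup.frev_eq (by omega) (by omega),
          show n - (n - p0) = p0 by omega]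
        exact h1
    · have hp01 : p0 = 1 := by omega
      refine Setup.L1a (Setup.rev S) (p := n - q) (by omega) (by omega) ?_ ?_
      · rw [Setup.frev_eq (by omega) (by omega), Setup.frev_zero, S.hn0,
          show n - (n - q - 1) = q + 1 by omega]
        rw [hp01] at hchord
        exact (by simpa using hchord.symm)
      · rw [Setup.frev_eq (by omega) (by omega), show n - (n - q) = q by omega]
        exact h2
  -- identify the special vertices
  have hvp : cPred c (cPred c v) = f (n-2) := by
    have h1 : cPred c v = f (n-1) := by
      rw [← hf0, ← S.hn0, hfcongr (show n = (n-1)+1 by omega), hfp]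
    rw [h1, hfcongr (show n-1 = (n-2)+1 by omega), hfp]
  have hvs : cSucc c (cSucc c v) = f 2 := by rw [← hf0, hfs, hfs]
  -- case dichotomy
  rcases hbpB with hP | hP <;> rcases hbqB with hQ | hQ
  · -- case A : both adjacent to u
    have hPnv : ¬ G.Adj (f 0) (f p0) := fun h => hM2 ⟨h, hQ⟩
    have hQnv : ¬ G.Adj (f 0) (f q) := fun h => hM1 ⟨hP, h⟩
    have hp3 : 3 ≤ p0 := by
      by_contra hcon
      rcases (by omega : p0 = 1 ∨ p0 = 2) with h | h
      · exact hPnv (h ▸ S.hadj 0)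
      · exact Setup.consecFalse S (j := 1) (by omega) S.hu1 (by rw [show (1:ℕ)+1 = p0 by omega]; exact hP)
    have hq3 : q ≤ n - 3 := by
      by_contra hcon
      have hq2 : q = n - 2 := by omega
      exact Setup.consecFalse S (j := n-2) (by omega) (by rw [← hq2]; exact hQ) (by rw [show n-2+1 = n-1 by omega]; exact S.hu2)
    have hpq2 : p0 + 2 ≤ q := by
      by_contra hcon
      have hq2 : q = p0 + 1 := by omega
      exact Setup.consecFalse S (j := p0) (by omega) hP (by rw [← hq2]; exact hQ)
    have hbpu : G.Adj u bp := hfp0 ▸ hP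
    have hbqu : G.Adj u bq := hfq ▸ hQ
    have hbpv : ¬ G.Adj v bp := by rw [← hfp0, ← hf0]; exact hPnv
    have hbqv : ¬ G.Adj v bq := by rw [← hfq, ← hf0]; exact hQnv
    have hrevch : G.Adj (Setup.frev f n (n - q - 1)) (Setup.frev f n (n - p0 + 1)) := by
      rw [Setup.frev_eq (by omega) (by omega), Setup.frev_eq (by omega) (by omega),
        show n - (n - q - 1) = q + 1 by omega, show n - (n - p0 + 1) = p0 - 1 by omega]
      exact hchord.symm
    refine ⟨Or.inl ⟨⟨hbpu, hbpv⟩, ⟨hbqu, hbqv⟩⟩, ?_, ?_, ?_, ?_⟩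
    · rw [hvp, ← hfp0]
      exact fun hx => Setup.L4 S hp3 hpq2 hq3 hchord hQ hx
    · rw [hvs, ← hfp0]
      intro hx
      refine Setup.L5 (Setup.rev S) (p := n - q) (q := n - p0) (by omega) (by omega) (by omega)
        hrevch ?_ ?_
      · rw [Setup.frev_eq (by omega) (by omega), show n - (n - q) = q by omega]
        exact hQ
      · rw [Setup.frev_eq (by omega) (by omega), Setup.frev_eq (by omega) (by omega),
          show n - (n - p0) = p0 by omega, show n - (n - 2) = 2 by omega]
        exact hx
    · rw [hvp, ← hfq]
      exact fun hx => Setup.L5 S hp3 hpq2 hq3 hchord hP hx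
    · rw [hvs, ← hfq]
      intro hx
      refine Setup.L4 (Setup.rev S) (p := n - q) (q := n - p0) (by omega) (by omega) (by omega)
        hrevch ?_ ?_
      · rw [Setup.frev_eq (by omega) (by omega), show n - (n - p0) = p0 by omega]
        exact hP
      · rw [Setup.frev_eq (by omega) (by omega), Setup.frev_eq (by omega) (by omega),
          show n - (n - q) = q by omega, show n - (n - 2) = 2 by omega]
        exact hx
  · exact absurd ⟨hP, hQ⟩ hM1
  · exact absurd ⟨hP, hQ⟩ hM2
  · -- case B : both adjacent to v
    have hPnu : ¬ G.Adj u (f p0) := fun h => hM1 ⟨h, hQ⟩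
    have hQnu : ¬ G.Adj u (f q) := fun h => hM2 ⟨hP, h⟩
    have hp3 : 3 ≤ p0 := by
      by_contra hcon
      rcases (by omega : p0 = 1 ∨ p0 = 2) with h | h
      · exact hPnu (by rw [h]; exact S.hu1)
      · exact Setup.LB2 S (by rw [← h]; exact hP)
    have hq3 : q ≤ n - 3 := by
      by_contra hcon
      have hq2 : q = n - 2 := by omega
      refine Setup.LB2 (Setup.rev S) ?_
      rw [Setup.frev_zero, S.hn0, Setup.frev_eq (by omega) (by omega)]
      rw [← hq2]
      exact hQ
    have hpq2 : p0 + 2 ≤ q := by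
      by_contra hcon
      have hq2 : q = p0 + 1 := by omega
      exact Setup.LBpq S hp1 hq2 hqn hP hQ
    have hbpv : G.Adj v bp := by rw [← hfp0, ← hf0]; exact hP
    have hbqv : G.Adj v bq := by rw [← hfq, ← hf0]; exact hQ
    have hbpu : ¬ G.Adj u bp := by rw [← hfp0]; exact hPnu
    have hbqu : ¬ G.Adj u bq := by rw [← hfq]; exact hQnu
    have hrevch : G.Adj (Setup.frev f n (n - q - 1)) (Setup.frev f n (n - p0 + 1)) := by
      rw [Setup.frev_eq (by omega) (by omega), Setup.frev_eq (by omega) (by omega),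
        show n - (n - q - 1) = q + 1 by omega, show n - (n - p0 + 1) = p0 - 1 by omega]
      exact hchord.symm
    refine ⟨Or.inr ⟨⟨hbpv, hbpu⟩, ⟨hbqv, hbqu⟩⟩, ?_, ?_, ?_, ?_⟩
    · rw [hvp, ← hfp0]
      exact fun hx => Setup.L6 S hp3 hpq2 hq3 hchord hQ hx
    · rw [hvs, ← hfp0]
      intro hx
      refine Setup.L7 (Setup.rev S) (p := n - q) (q := n - p0) (by omega) (by omega) (by omega)
        hrevch ?_ ?_
      · rw [Setup.frev_zero, S.hn0, Setup.frev_eq (by omega) (by omega),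
          show n - (n - q) = q by omega]
        exact hQ
      · rw [Setup.frev_eq (by omega) (by omega), Setup.frev_eq (by omega) (by omega),
          show n - (n - p0) = p0 by omega, show n - (n - 2) = 2 by omega]
        exact hx
    · rw [hvp, ← hfq]
      exact fun hx => Setup.L7 S hp3 hpq2 hq3 hchord hP hx
    · rw [hvs, ← hfq]
      intro hx
      refine Setup.L6 (Setup.rev S) (p := n - q) (q := n - p0) (by omega) (by omega) (by omega)
        hrevch ?_ ?_
      · rw [Setup.frev_zero, S.hn0, Setup.frev_eq (by omega) (by omega),
          show n - (n - p0) = p0 by omega]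
        exact hP
      · rw [Setup.frev_eq (by omega) (by omega), Setup.frev_eq (by omega) (by omega),
          show n - (n - q) = q by omega, show n - (n - 2) = 2 by omega]
        exact hx

end
end Paper
end
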